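/- arXiv:1704.02887 — 4 statements merged into one kernel-verified Lean document; each statement's English description precedes it below -/
import Mathlib

section
/- For every t > 0 and every β ∈ ℝ, the value of Jacobi's third theta function on the imaginary axis, ϑ₃(β; it) = ∑_{k∈ℤ} exp(−π k² t + 2πi k β), is a strictly positive real number. -/
open scoped Real
open Complex

/-- Jacobi's third theta function on the imaginary axis,
`ϑ₃(β; it) = ∑_{k∈ℤ} exp(−π k² t + 2πi k β)`, is a strictly positive real number
for every `t > 0` and `β ∈ ℝ`. -/
theorem jacobiTheta3_im_axis_pos_real (t β : ℝ) (ht : 0 < t) :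
    (∑' k : ℤ, Complex.exp (-(π : ℂ) * (k : ℂ) ^ 2 * (t : ℂ) +
      2 * (π : ℂ) * Complex.I * (k : ℂ) * (β : ℂ))).im = 0 ∧
    0 < (∑' k : ℤ, Complex.exp (-(π : ℂ) * (k : ℂ) ^ 2 * (t : ℂ) +
      2 * (π : ℂ) * Complex.I * (k : ℂ) * (β : ℂ))).re := by
  have ht' : (0:ℝ) < (t:ℂ).re := by simpa using ht
  -- summability of the Gaussian series
  have hsum : Summable (fun n : ℤ => Real.exp (-(π/t) * ((n:ℝ) - β)^2)) := by
    refine (HurwitzKernelBounds.summable_f_int 0 (-β) (one_div_pos.mpr ht)).congr fun n => ?_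
    rw [HurwitzKernelBounds.f_int, pow_zero, one_mul]
    congr 1
    ring
  have key := Complex.tsum_exp_neg_quadratic ht' (Complex.I * β)
  have h1 : (∑' k : ℤ, Complex.exp (-(π : ℂ) * (k : ℂ) ^ 2 * (t : ℂ) +
      2 * (π : ℂ) * Complex.I * (k : ℂ) * (β : ℂ)))
      = ((t ^ (-(1/2) : ℝ) * ∑' n : ℤ, Real.exp (-(π/t) * ((n:ℝ) - β)^2) : ℝ) : ℂ) := by
    have h2 : (∑' k : ℤ, Complex.exp (-(π : ℂ) * (k : ℂ) ^ 2 * (t : ℂ) +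
        2 * (π : ℂ) * Complex.I * (k : ℂ) * (β : ℂ)))
        = ∑' n : ℤ, Complex.exp (-(π:ℂ) * (t:ℂ) * (n:ℂ) ^ 2 + 2 * (π:ℂ) * (Complex.I * (β:ℂ)) * (n:ℂ)) := by
      refine tsum_congr fun n => ?_
      ring_nf
    rw [h2, key]
    have h3 : ∀ n : ℤ, Complex.exp (-(π:ℂ) / (t:ℂ) * ((n:ℂ) + Complex.I * (Complex.I * (β:ℂ))) ^ 2)
        = ((Real.exp (-(π/t) * ((n:ℝ) - β)^2) : ℝ) : ℂ) := by
      intro n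
      rw [Complex.ofReal_exp]
      congr 1
      have : (n:ℂ) + Complex.I * (Complex.I * (β:ℂ)) = (n:ℂ) - (β:ℂ) := by
        rw [← mul_assoc, Complex.I_mul_I]; ring
      rw [this]
      push_cast
      field_simp
    simp_rw [h3]
    rw [← Complex.ofReal_tsum, Complex.ofReal_mul]
    congr 1
    rw [Real.rpow_neg ht.le,
      show ((1/2:ℂ)) = ((1/2:ℝ):ℂ) by norm_num, ← Complex.ofReal_cpow ht.le]
    simp [one_div]
  constructor
  · rw [h1, Complex.ofReal_im]
  · rw [h1, Complex.ofReal_re]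
    apply mul_pos (Real.rpow_pos_of_pos ht _)
    exact Summable.tsum_pos hsum (fun n => (Real.exp_pos _).le) 0 (Real.exp_pos _)
end

section
/- For every fixed t > 0, the function β ↦ ϑ₃(β; it) is real-valued and strictly decreasing on the interval [0, 1/2]: if 0 ≤ β₁ < β₂ ≤ 1/2, then ϑ₃(β₂; it) < ϑ₃(β₁; it). -/
open scoped Real
open Complex

set_option maxHeartbeats 1000000

namespace JT3

lemma nat_le_sq (n : ℕ) : (n : ℝ) ≤ (n : ℝ)^2 := by
  have : n ≤ n^2 := Nat.le_self_pow two_ne_zero n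
  exact_mod_cast this

/-- ℕ-indexed shifted Gaussian is summable. -/
lemma summable_gaussNat {c : ℝ} (hc : 0 < c) (u : ℝ) :
    Summable fun n : ℕ => Real.exp (-c * (u + n)^2) := by
  refine Summable.of_nonneg_of_le (fun n => (Real.exp_pos _).le)
    (f := fun n : ℕ => Real.exp (c * u^2) * (Real.exp (-c/2))^n) ?_ ?_
  · intro n
    rw [← Real.exp_nat_mul, ← Real.exp_add]
    apply Real.exp_le_exp.mpr
    have h1 : (n:ℝ) ≤ (n:ℝ)^2 := nat_le_sq n
    nlinarith [sq_nonneg (2*u + n), hc.le, sq_nonneg (u + n)]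
  · exact (summable_geometric_of_lt_one (Real.exp_pos _).le
      (Real.exp_lt_one_iff.mpr (by linarith))).mul_left _

lemma summable_gaussInt {c : ℝ} (hc : 0 < c) (u : ℝ) :
    Summable fun k : ℤ => Real.exp (-c * (u + k)^2) := by
  refine Summable.of_nat_of_neg ?_ ?_
  · exact summable_gaussNat hc u
  · have := summable_gaussNat hc (-u)
    refine this.congr fun n => ?_
    push_cast
    ring_nf

-- π bounds
lemma pi_lb : (3.1415:ℝ) < π := by
  have := Real.pi_gt_d6
  linarith

lemma exp_one_lb : (2.7182:ℝ) < Real.exp 1 := by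
  have := Real.exp_one_gt_d9
  linarith

lemma exp5_gt : (80:ℝ) < Real.exp 5 := by
  have h1 : (2.7182:ℝ)^5 ≤ (Real.exp 1)^5 :=
    pow_le_pow_left₀ (by norm_num) exp_one_lb.le 5
  have h2 : Real.exp 5 = (Real.exp 1)^5 := by
    rw [← Real.exp_nat_mul]; norm_num
  nlinarith [h1]

/-- `16 c e^{-3c/5} < 1` for `c ≥ 4π`. -/
lemma num1 {c : ℝ} (hc : 4*π ≤ c) : 16 * c * Real.exp (-(3/5)*c) < 1 := by
  have hπ := pi_lb
  have hcpos : 0 < c := by nlinarith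
  have h1 : 16 * c < Real.exp ((3/5)*c) := by
    have ha : Real.exp ((3/5)*c) = Real.exp ((2/5)*c) * Real.exp ((1/5)*c) := by
      rw [← Real.exp_add]; ring_nf
    have hb : Real.exp 5 ≤ Real.exp ((2/5)*c) := Real.exp_le_exp.mpr (by nlinarith)
    have hd : (1/5)*c < Real.exp ((1/5)*c) := by
      have := Real.add_one_le_exp ((1/5)*c); linarith
    calc 16 * c = 80 * ((1/5)*c) := by ring
      _ < Real.exp 5 * Real.exp ((1/5)*c) := by
          apply mul_lt_mul' exp5_gt.le hd (by linarith) (Real.exp_pos _)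
      _ ≤ Real.exp ((2/5)*c) * Real.exp ((1/5)*c) := by
          apply mul_le_mul_of_nonneg_right hb (Real.exp_pos _).le
      _ = Real.exp ((3/5)*c) := ha.symm
  have h2 : Real.exp (-(3/5)*c) = (Real.exp ((3/5)*c))⁻¹ := by
    rw [← Real.exp_neg]; ring_nf
  rw [h2]
  rw [mul_inv_lt_iff₀ (Real.exp_pos _)]
  linarith

/-- `4 e^{-3c/5} ≤ 1/2` for `c ≥ 4π`. -/
lemma num_rho {c : ℝ} (hc : 4*π ≤ c) : 4 * Real.exp (-(3/5)*c) ≤ 1/2 := by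
  have hπ := pi_lb
  have h8 : (8:ℝ) < Real.exp ((3/5)*c) := by
    have := Real.add_one_le_exp ((3/5)*c)
    nlinarith
  have h2 : Real.exp (-(3/5)*c) = (Real.exp ((3/5)*c))⁻¹ := by
    rw [← Real.exp_neg]; ring_nf
  rw [h2]
  have hp := Real.exp_pos ((3*5⁻¹)*c)
  have hinv : Real.exp ((3*5⁻¹)*c) * (Real.exp ((3*5⁻¹)*c))⁻¹ = 1 := mul_inv_cancel₀ (ne_of_gt hp)
  have hxpos : 0 < (Real.exp ((3*5⁻¹)*c))⁻¹ := inv_pos.mpr hp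
  nlinarith [hinv, h8, hxpos]

/-- φ(u) = u e^{-cu²} is strictly decreasing past 1/5 when c ≥ 4π. -/
lemma phi_anti {c : ℝ} (hc : 4*π ≤ c) {u v : ℝ} (hu : 1/5 ≤ u) (huv : u < v) :
    v * Real.exp (-c*v^2) < u * Real.exp (-c*u^2) := by
  have hπ := pi_lb
  have hcpos : 0 < c := by nlinarith
  have hupos : 0 < u := by linarith
  have hkey : v < u * Real.exp (c*(v^2 - u^2)) := by
    have h1 : 1 + c*(v^2-u^2) ≤ Real.exp (c*(v^2-u^2)) := by
      have := Real.add_one_le_exp (c*(v^2-u^2)); linarith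
    have h2 : v < u * (1 + c*(v^2-u^2)) := by
      have h5 : 2/5 < u + v := by linarith
      have h6 : 2/25 < u*(u+v) := by nlinarith
      have h7 : (4*π)*(2/25) ≤ c*(u*(u+v)) :=
        mul_le_mul hc h6.le (by norm_num) (by nlinarith)
      have hcu : 1 < c * u * (u + v) := by nlinarith [h7, hπ]
      nlinarith [sub_pos.mpr huv, hcu]
    calc v < u * (1 + c*(v^2-u^2)) := h2
      _ ≤ u * Real.exp (c*(v^2-u^2)) := by
          apply mul_le_mul_of_nonneg_left h1 hupos.le
  have hev : Real.exp (-c*u^2) = Real.exp (-c*v^2) * Real.exp (c*(v^2-u^2)) := by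
    rw [← Real.exp_add]; ring_nf
  rw [hev]
  calc v * Real.exp (-c*v^2)
      < u * Real.exp (c*(v^2-u^2)) * Real.exp (-c*v^2) := by
        apply mul_lt_mul_of_pos_right hkey (Real.exp_pos _)
    _ = u * (Real.exp (-c*v^2) * Real.exp (c*(v^2-u^2))) := by ring

/-- Mean value theorem for the Gaussian. -/
lemma gauss_slope (c : ℝ) {α β' : ℝ} (h : α < β') :
    ∃ ξ ∈ Set.Ioo α β', Real.exp (-c*α^2) - Real.exp (-c*β'^2)
      = 2*c*(β'-α) * (ξ * Real.exp (-c*ξ^2)) := by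
  have hd : ∀ u : ℝ, HasDerivAt (fun v : ℝ => Real.exp (-c*v^2))
      (Real.exp (-c*u^2) * (-c*(2*u))) u := by
    intro u
    have h1 : HasDerivAt (fun v : ℝ => -c*v^2) (-c*(2*u)) u := by
      have := (hasDerivAt_pow 2 u).const_mul (-c)
      simpa using this
    exact h1.exp
  obtain ⟨ξ, hmem, heq⟩ := exists_hasDerivAt_eq_slope (fun v : ℝ => Real.exp (-c*v^2)) _ h
    (Continuous.continuousOn (by continuity)) (fun u _ => hd u)
  refine ⟨ξ, hmem, ?_⟩
  have hba : β' - α ≠ 0 := by linarith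
  have := (div_eq_iff hba).mp heq.symm
  -- this : exp(-cβ'²) - exp(-cα²) = exp(-cξ²)*(-c*(2ξ)) * (β'-α)
  nlinarith [this]

lemma summable_cexp {t : ℝ} (ht : 0 < t) (β : ℝ) :
    Summable fun k : ℤ =>
      Complex.exp ((-π * (k:ℝ)^2 * t : ℝ) : ℂ) * Complex.exp (((2*π*(k:ℝ)*β : ℝ) : ℂ) * I) := by
  apply Summable.of_norm_bounded (g := fun k : ℤ => Real.exp (-(π*t) * (0 + k)^2))
    (summable_gaussInt (by positivity) 0)
  intro k
  rw [norm_mul, Complex.norm_exp_ofReal,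
    Complex.norm_exp_ofReal_mul_I, mul_one]
  apply Real.exp_le_exp.mpr
  apply le_of_eq
  ring

lemma summable_fourier {t : ℝ} (ht : 0 < t) (β : ℝ) :
    Summable fun k : ℤ => Real.exp (-π * (k:ℝ)^2 * t) * Real.cos (2*π*(k:ℝ)*β) := by
  apply Summable.of_norm_bounded (g := fun k : ℤ => Real.exp (-(π*t) * (0 + k)^2))
    (summable_gaussInt (by positivity) 0)
  intro k
  rw [Real.norm_eq_abs, abs_mul, Real.abs_exp]
  calc Real.exp (-π * (k:ℝ)^2*t) * |Real.cos (2*π*(k:ℝ)*β)|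
      ≤ Real.exp (-π * (k:ℝ)^2*t) * 1 :=
        mul_le_mul_of_nonneg_left (Real.abs_cos_le_one _) (Real.exp_pos _).le
    _ = Real.exp (-(π*t) * (0+k)^2) := by rw [mul_one]; congr 1; ring

lemma part1 {t : ℝ} (ht : 0 < t) (β : ℝ) :
    (∑' k : ℤ, Complex.exp (-(π : ℂ) * (k : ℂ) ^ 2 * (t : ℂ) +
        2 * (π : ℂ) * Complex.I * (k : ℂ) * (β : ℂ)))
    = ((∑' k : ℤ, Real.exp (-π * (k:ℝ) ^ 2 * t) * Real.cos (2 * π * (k:ℝ) * β) : ℝ) : ℂ) := by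
  set f : ℤ → ℂ := fun k =>
    Complex.exp ((-π * (k:ℝ)^2 * t : ℝ) : ℂ) * Complex.exp (((2*π*(k:ℝ)*β : ℝ) : ℂ) * I) with hf
  have hrw : (fun k : ℤ => Complex.exp (-(π : ℂ) * (k : ℂ) ^ 2 * (t : ℂ) +
      2 * (π : ℂ) * Complex.I * (k : ℂ) * (β : ℂ))) = f := by
    funext k
    show _ = Complex.exp _ * Complex.exp _
    rw [← Complex.exp_add]
    congr 1
    push_cast
    ring
  rw [hrw]
  have hsum : Summable f := summable_cexp ht β
  have hsumneg : Summable fun k : ℤ => f (-k) := ((Equiv.neg ℤ).summable_iff).mpr hsum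
  have hnegsum : ∑' k : ℤ, f (-k) = ∑' k : ℤ, f k := by
    simpa using (Equiv.neg ℤ).tsum_eq f
  set r : ℤ → ℝ := fun k => Real.exp (-π * (k:ℝ)^2*t) * Real.cos (2*π*(k:ℝ)*β) with hr
  have key : ∀ k : ℤ, f k + f (-k) = ((2 * r k : ℝ) : ℂ) := by
    intro k
    have hA : (-π * ((-k:ℤ):ℝ)^2 * t) = (-π * (k:ℝ)^2 * t) := by push_cast; ring
    have hB : (2*π*((-k:ℤ):ℝ)*β) = -(2*π*(k:ℝ)*β) := by push_cast; ring
    simp only [hf, hr, hA, hB]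
    rw [Complex.exp_mul_I, Complex.exp_mul_I]
    push_cast
    ring_nf
    rw [Complex.cos_neg, Complex.sin_neg]
    ring
  have h2S : (∑' k, f k) + (∑' k, f k) = ((2 * ∑' k, r k : ℝ) : ℂ) := by
    nth_rewrite 1 [← hnegsum]
    rw [← Summable.tsum_add hsumneg hsum]
    have : ∀ k : ℤ, f (-k) + f k = ((2 * r k : ℝ) : ℂ) := by
      intro k; rw [add_comm]; exact key k
    rw [tsum_congr this]
    rw [← Complex.ofReal_tsum]
    congr 1
    exact tsum_mul_left
  have h : (2:ℂ) * ∑' k, f k = 2 * ((∑' k, r k : ℝ) : ℂ) := by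
    rw [two_mul, h2S]; push_cast; ring
  exact mul_left_cancel₀ two_ne_zero h

lemma poisson {t : ℝ} (ht : 0 < t) (β : ℝ) :
    (∑' k : ℤ, Real.exp (-π * (k:ℝ)^2 * t) * Real.cos (2*π*(k:ℝ)*β))
    = (Real.sqrt t)⁻¹ * ∑' k : ℤ, Real.exp (-(π/t) * (β + (k:ℝ))^2) := by
  have ht' : (0:ℝ) < (t:ℂ).re := by simpa using ht
  have h := Complex.tsum_exp_neg_quadratic ht' (Complex.I * (β:ℂ))
  -- rewrite LHS of h to the part1 LHS
  have hL : (∑' n : ℤ, Complex.exp (-(π:ℂ) * (t:ℂ) * (n:ℂ)^2 + 2 * (π:ℂ) * (Complex.I * (β:ℂ)) * (n:ℂ)))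
      = (∑' k : ℤ, Complex.exp (-(π : ℂ) * (k : ℂ) ^ 2 * (t : ℂ) +
        2 * (π : ℂ) * Complex.I * (k : ℂ) * (β : ℂ))) := by
    apply tsum_congr; intro k; congr 1; ring
  rw [hL] at h
  rw [part1 ht β] at h
  -- rewrite RHS of h
  have hR : (∑' n : ℤ, Complex.exp (-(π:ℂ) / (t:ℂ) * ((n:ℂ) + Complex.I * (Complex.I * (β:ℂ)))^2))
      = ((∑' k : ℤ, Real.exp (-(π/t) * (β + (k:ℝ))^2) : ℝ) : ℂ) := by
    have h1 : ∀ n : ℤ, Complex.exp (-(π:ℂ) / (t:ℂ) * ((n:ℂ) + Complex.I * (Complex.I * (β:ℂ)))^2)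
        = ((Real.exp (-(π/t) * (((-n:ℤ):ℝ) + β)^2) : ℝ) : ℂ) := by
      intro n
      rw [Complex.ofReal_exp]
      congr 1
      have : Complex.I * (Complex.I * (β:ℂ)) = -(β:ℂ) := by
        rw [← mul_assoc, Complex.I_mul_I]; ring
      rw [this]
      push_cast
      ring
    rw [tsum_congr h1, ← Complex.ofReal_tsum]
    norm_cast
    have := (Equiv.neg ℤ).tsum_eq (fun k : ℤ => Real.exp (-(π/t) * (β + (k:ℝ))^2))
    rw [← this]
    apply tsum_congr; intro n
    simp only [Equiv.neg_apply]
    congr 1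
    push_cast
    ring
  rw [hR] at h
  -- the power factor
  have hpow : (1:ℂ) / (t:ℂ) ^ (1/2 : ℂ) = ((Real.sqrt t)⁻¹ : ℝ) := by
    have h2 : Real.sqrt t = t ^ ((1:ℝ)/2) := Real.sqrt_eq_rpow t
    have h3 : ((t:ℂ)) ^ (1/2 : ℂ) = ((t ^ ((1:ℝ)/2) : ℝ) : ℂ) := by
      rw [show ((1:ℂ)/2) = (((1:ℝ)/2 : ℝ):ℂ) by norm_num, ← Complex.ofReal_cpow ht.le]
    rw [h3, ← h2, one_div, ← Complex.ofReal_inv]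
  rw [hpow] at h
  rw [← Complex.ofReal_mul] at h
  exact_mod_cast h

noncomputable def P (c u : ℝ) : ℝ := ∑' k : ℤ, Real.exp (-c*(u+(k:ℝ))^2)
noncomputable def Q (c u : ℝ) : ℝ := ∑' n : ℕ, Real.exp (-c*(u+(n:ℝ))^2)

lemma negpart_congr (c u : ℝ) :
    (fun n : ℕ => Real.exp (-c*(u+((-(n+1):ℤ)):ℝ)^2)) =
      fun n : ℕ => Real.exp (-c*((1-u)+(n:ℝ))^2) := by
  funext n; congr 1; push_cast; ring

lemma P_eq_B {c : ℝ} (hc : 0 < c) (u : ℝ) : P c u = Q c u + Q c (1-u) := by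
  have h1 : Summable fun n : ℕ => (fun k : ℤ => Real.exp (-c*(u+(k:ℝ))^2)) (n : ℕ) := by
    exact (summable_gaussNat hc u).congr (fun n => by push_cast; ring_nf)
  have h2 : Summable fun n : ℕ => (fun k : ℤ => Real.exp (-c*(u+(k:ℝ))^2)) (-(n+1)) := by
    exact (summable_gaussNat hc (1-u)).congr (fun n => by push_cast; ring_nf)
  have hmain := tsum_of_nat_of_neg_add_one
    (f := fun k : ℤ => Real.exp (-c*(u+(k:ℝ))^2)) h1 h2
  have eA : (∑' n : ℕ, (fun k : ℤ => Real.exp (-c*(u+(k:ℝ))^2)) (n : ℕ)) = Q c u :=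
    tsum_congr fun n => by push_cast; ring_nf
  have eB : (∑' n : ℕ, (fun k : ℤ => Real.exp (-c*(u+(k:ℝ))^2)) (-(n+1))) = Q c (1-u) :=
    tsum_congr fun n => by push_cast; ring_nf
  rw [P, hmain, eA, eB]

lemma P_eq_A {c : ℝ} (hc : 0 < c) (u : ℝ) :
    P c u = Q c (u+1) + Real.exp (-c*u^2) + Q c (1-u) := by
  have h1 : Summable fun n : ℕ => (fun k : ℤ => Real.exp (-c*(u+(k:ℝ))^2)) (n+1) := by
    exact (summable_gaussNat hc (u+1)).congr (fun n => by push_cast; ring_nf)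
  have h2 : Summable fun n : ℕ => (fun k : ℤ => Real.exp (-c*(u+(k:ℝ))^2)) (-(n+1)) := by
    exact (summable_gaussNat hc (1-u)).congr (fun n => by push_cast; ring_nf)
  have hmain := tsum_of_add_one_of_neg_add_one
    (f := fun k : ℤ => Real.exp (-c*(u+(k:ℝ))^2)) h1 h2
  have eA : (∑' n : ℕ, (fun k : ℤ => Real.exp (-c*(u+(k:ℝ))^2)) (n+1)) = Q c (u+1) :=
    tsum_congr fun n => by push_cast; ring_nf
  have eB : (∑' n : ℕ, (fun k : ℤ => Real.exp (-c*(u+(k:ℝ))^2)) (-(n+1))) = Q c (1-u) :=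
    tsum_congr fun n => by push_cast; ring_nf
  have e0 : (fun k : ℤ => Real.exp (-c*(u+(k:ℝ))^2)) 0 = Real.exp (-c*u^2) := by
    norm_num
  rw [P, hmain, eA, eB, show Real.exp (-c*(u+((0:ℤ):ℝ))^2) = Real.exp (-c*u^2) from e0]

lemma caseB {c : ℝ} (hc : 4*π ≤ c) {x y : ℝ} (hx : 1/5 ≤ x) (hxy : x < y) (hy : y ≤ 1/2) :
    P c y < P c x := by
  have hπ : (3.1415:ℝ) < π := by have := Real.pi_gt_d6; linarith
  have hcpos : 0 < c := by nlinarith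
  have hQx := summable_gaussNat hcpos x
  have hQy := summable_gaussNat hcpos y
  have hQ1x := summable_gaussNat hcpos (1-x)
  have hQ1y := summable_gaussNat hcpos (1-y)
  set T : ℕ → ℝ := fun n =>
    (Real.exp (-c*(x+(n:ℝ))^2) - Real.exp (-c*(y+(n:ℝ))^2))
    - (Real.exp (-c*((1-y)+(n:ℝ))^2) - Real.exp (-c*((1-x)+(n:ℝ))^2)) with hT
  have hTpos : ∀ n : ℕ, 0 < T n := by
    intro n
    have hn0 : (0:ℝ) ≤ (n:ℝ) := Nat.cast_nonneg n
    obtain ⟨ξ₁, hm1, he1⟩ := gauss_slope c (show x + (n:ℝ) < y + (n:ℝ) by linarith)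
    obtain ⟨ξ₂, hm2, he2⟩ := gauss_slope c (show (1-y) + (n:ℝ) < (1-x) + (n:ℝ) by linarith)
    have hphi : ξ₂ * Real.exp (-c*ξ₂^2) < ξ₁ * Real.exp (-c*ξ₁^2) := by
      apply phi_anti hc
      · have := hm1.1; linarith
      · have h1 := hm1.2
        have h2 := hm2.1
        linarith
    rw [hT]
    simp only []
    rw [he1, he2]
    have hc2 : 0 < 2*c*(y - x) := by nlinarith
    have e1 : (2:ℝ)*c*((y+(n:ℝ)) - (x+(n:ℝ))) = 2*c*(y-x) := by ring
    have e2 : (2:ℝ)*c*(((1-x)+(n:ℝ)) - ((1-y)+(n:ℝ))) = 2*c*(y-x) := by ring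
    rw [e1, e2]
    nlinarith [hphi, hc2]
  have hTsum : Summable T := ((hQx.sub hQy).sub (hQ1y.sub hQ1x)).congr (fun n => by rw [hT])
  have hdiff : P c x - P c y = ∑' n, T n := by
    have s1 : (∑' n : ℕ, (Real.exp (-c*(x+(n:ℝ))^2) - Real.exp (-c*(y+(n:ℝ))^2)))
        = Q c x - Q c y := Summable.tsum_sub hQx hQy
    have s2 : (∑' n : ℕ, (Real.exp (-c*((1-y)+(n:ℝ))^2) - Real.exp (-c*((1-x)+(n:ℝ))^2)))
        = Q c (1-y) - Q c (1-x) := Summable.tsum_sub hQ1y hQ1x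
    have s3 : (∑' n : ℕ, T n)
        = (∑' n : ℕ, (Real.exp (-c*(x+(n:ℝ))^2) - Real.exp (-c*(y+(n:ℝ))^2)))
          - ∑' n : ℕ, (Real.exp (-c*((1-y)+(n:ℝ))^2) - Real.exp (-c*((1-x)+(n:ℝ))^2)) :=
      Summable.tsum_sub (hQx.sub hQy) (hQ1y.sub hQ1x)
    have hPx := P_eq_B hcpos x
    have hPy := P_eq_B hcpos y
    have hy1 : (1:ℝ) - x = 1 - x := rfl
    linarith [s1, s2, s3, hPx, hPy]
  have : 0 < ∑' n, T n := Summable.tsum_pos hTsum (fun n => (hTpos n).le) 0 (hTpos 0)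
  linarith [hdiff, this]

lemma sq_le_pow4 : ∀ n : ℕ, ((n:ℝ)+1)^2 ≤ 4^n := by
  intro n
  induction n with
  | zero => norm_num
  | succ n ih =>
    have h4 : (4:ℝ)^(n+1) = 4 * 4^n := by ring
    push_cast
    rw [h4]
    push_cast at ih
    nlinarith [ih, Nat.cast_nonneg (α := ℝ) n]

/-- The loss-gain estimate for one Gaussian image pair. -/
lemma pair_loss {c x y k : ℝ} (hc : 0 < c) (hx : 0 ≤ x) (hxy : x < y) (hy : y ≤ 1/5)
    (hk : 1 ≤ k) :
    -(8*c^2*k^2*y*(y-x) * Real.exp (-c*(k-y)^2)) ≤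
      (Real.exp (-c*(k+x)^2) - Real.exp (-c*(k+y)^2))
      + (Real.exp (-c*(k-x)^2) - Real.exp (-c*(k-y)^2)) := by
  set A := Real.exp (-c*(k-y)^2) with hA
  set B := Real.exp (-c*(k+y)^2) with hB
  have hApos : 0 < A := Real.exp_pos _
  have hBpos : 0 < B := Real.exp_pos _
  have hy0 : 0 < y := by linarith
  have hz1 : (0:ℝ) ≤ c*(y-x)*(2*k-x-y) := by
    apply mul_nonneg (mul_nonneg hc.le (by linarith)) (by linarith)
  have hz2 : (0:ℝ) ≤ c*(y-x)*(2*k+x+y) := by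
    apply mul_nonneg (mul_nonneg hc.le (by linarith)) (by linarith)
  have hz3 : (0:ℝ) ≤ 4*c*k*y := by positivity
  -- bound1 : A - exp(-c(k-x)²) ≤ A * z1
  have e1 : Real.exp (-c*(k-x)^2) = A * Real.exp (-(c*(y-x)*(2*k-x-y))) := by
    rw [hA, ← Real.exp_add]; congr 1; ring
  have bound1 : A - Real.exp (-c*(k-x)^2) ≤ A * (c*(y-x)*(2*k-x-y)) := by
    rw [e1]
    have := Real.add_one_le_exp (-(c*(y-x)*(2*k-x-y)))
    nlinarith [hApos]
  -- bound2 : B * z2 ≤ exp(-c(k+x)²) - B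
  have e2 : Real.exp (-c*(k+x)^2) = B * Real.exp (c*(y-x)*(2*k+x+y)) := by
    rw [hB, ← Real.exp_add]; congr 1; ring
  have bound2 : B * (c*(y-x)*(2*k+x+y)) ≤ Real.exp (-c*(k+x)^2) - B := by
    rw [e2]
    have := Real.add_one_le_exp (c*(y-x)*(2*k+x+y))
    nlinarith [hBpos]
  -- bound3 : A - B ≤ A * (4cky)
  have e3 : B = A * Real.exp (-(4*c*k*y)) := by
    rw [hA, hB, ← Real.exp_add]; congr 1; ring
  have bound3 : A - B ≤ A * (4*c*k*y) := by
    rw [e3]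
    have := Real.add_one_le_exp (-(4*c*k*y))
    nlinarith [hApos]
  -- step3 : A z1 - B z2 ≤ 2ck(y-x)(A-B)
  have step3 : A * (c*(y-x)*(2*k-x-y)) - B * (c*(y-x)*(2*k+x+y))
      ≤ c*(y-x)*(2*k)*(A - B) := by
    nlinarith [mul_nonneg (mul_nonneg (mul_nonneg hc.le (by linarith : (0:ℝ) ≤ y - x))
      (by linarith : (0:ℝ) ≤ x + y)) (by positivity : (0:ℝ) ≤ A + B)]
  -- step5
  have step5 : c*(y-x)*(2*k)*(A - B) ≤ c*(y-x)*(2*k)*(A*(4*c*k*y)) := by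
    apply mul_le_mul_of_nonneg_left bound3
    exact mul_nonneg (mul_nonneg hc.le (by linarith)) (by linarith)
  have idemp : c*(y-x)*(2*k)*(A*(4*c*k*y)) = 8*c^2*k^2*y*(y-x)*A := by ring
  linarith [bound1, bound2, step3, step5, idemp.le, idemp.ge]

lemma caseA {c : ℝ} (hc : 4*π ≤ c) {x y : ℝ} (hx : 0 ≤ x) (hxy : x < y) (hy : y ≤ 1/5) :
    P c y < P c x := by
  have hπ : (3.1415:ℝ) < π := by have := Real.pi_gt_d6; linarith
  have hcpos : 0 < c := by nlinarith
  have hQx1 := summable_gaussNat hcpos (x+1)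
  have hQy1 := summable_gaussNat hcpos (y+1)
  have hQ1x := summable_gaussNat hcpos (1-x)
  have hQ1y := summable_gaussNat hcpos (1-y)
  set D : ℕ → ℝ := fun n =>
    (Real.exp (-c*((x+1)+(n:ℝ))^2) - Real.exp (-c*((y+1)+(n:ℝ))^2))
    + (Real.exp (-c*((1-x)+(n:ℝ))^2) - Real.exp (-c*((1-y)+(n:ℝ))^2)) with hD
  set L : ℕ → ℝ := fun n =>
    8*c^2*((n:ℝ)+1)^2*y*(y-x) * Real.exp (-c*(((n:ℝ)+1)-y)^2) with hL
  -- pointwise bound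
  have hd : ∀ n : ℕ, -(L n) ≤ D n := by
    intro n
    have hk : (1:ℝ) ≤ (n:ℝ)+1 := by have : (0:ℝ) ≤ (n:ℝ) := Nat.cast_nonneg n; linarith
    have key := pair_loss hcpos hx hxy hy hk
    rw [hD, hL]
    simp only []
    have r1 : -c*((x+1)+(n:ℝ))^2 = -c*(((n:ℝ)+1)+x)^2 := by ring
    have r2 : -c*((y+1)+(n:ℝ))^2 = -c*(((n:ℝ)+1)+y)^2 := by ring
    have r3 : -c*((1-x)+(n:ℝ))^2 = -c*(((n:ℝ)+1)-x)^2 := by ring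
    have r4 : -c*((1-y)+(n:ℝ))^2 = -c*(((n:ℝ)+1)-y)^2 := by ring
    rw [r1, r2, r3, r4]
    exact key
  -- geometric bound on L
  set ρ := 4*Real.exp (-(3/5)*c) with hρdef
  have hρpos : 0 < ρ := by positivity
  have hρhalf : ρ ≤ 1/2 := num_rho hc
  set KK := 8*c^2*y*(y-x)*(Real.exp (-c*(1/25)) * Real.exp (-(3/5)*c)) with hKK
  have hKKpos : 0 < KK := by
    rw [hKK]; have h1 : 0 < y := by linarith
    have h2 : 0 < y - x := by linarith
    positivity
  have hLgeom : ∀ n : ℕ, L n ≤ KK * ρ^n := by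
    intro n
    rw [hL, hKK, hρdef]
    simp only []
    set k : ℝ := (n:ℝ)+1 with hkdef
    have hk1 : (1:ℝ) ≤ k := by rw [hkdef]; have : (0:ℝ) ≤ (n:ℝ) := Nat.cast_nonneg n; linarith
    have hexp : Real.exp (-c*(k-y)^2) ≤ Real.exp (-c*(1/25)) * Real.exp (-(3/5)*c*k) := by
      rw [← Real.exp_add]
      apply Real.exp_le_exp.mpr
      have h1 : (k-1/5)^2 ≤ (k-y)^2 := by nlinarith
      have h2 : k ≤ k^2 := by nlinarith
      have h3 : 1/25 + (3/5)*k ≤ (k-y)^2 := by nlinarith [h1, h2]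
      nlinarith [mul_le_mul_of_nonneg_left h3 hcpos.le]
    have hsq : k^2 ≤ 4^n := by rw [hkdef]; exact sq_le_pow4 n
    have hcoef : (0:ℝ) ≤ 8*c^2*y*(y-x) := by
      have h1 : 0 < y := by linarith
      have h2 : 0 < y - x := by linarith
      positivity
    have hexpand : Real.exp (-(3/5)*c*k) = Real.exp (-(3/5)*c) * (Real.exp (-(3/5)*c))^n := by
      rw [← Real.exp_nat_mul, ← Real.exp_add, hkdef]; congr 1; ring
    calc 8*c^2*k^2*y*(y-x) * Real.exp (-c*(k-y)^2)
        ≤ 8*c^2*k^2*y*(y-x) * (Real.exp (-c*(1/25)) * Real.exp (-(3/5)*c*k)) := by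
          apply mul_le_mul_of_nonneg_left hexp
          nlinarith [hcoef, hk1]
      _ = (8*c^2*y*(y-x)) * (Real.exp (-c*(1/25)) * Real.exp (-(3/5)*c*k)) * k^2 := by ring
      _ ≤ (8*c^2*y*(y-x)) * (Real.exp (-c*(1/25)) * Real.exp (-(3/5)*c*k)) * 4^n := by
          apply mul_le_mul_of_nonneg_left hsq
          positivity
      _ = (8*c^2*y*(y-x)*(Real.exp (-c*(1/25)) * Real.exp (-(3/5)*c))) * ((4*Real.exp (-(3/5)*c))^n) := by
          rw [hexpand, mul_pow]; ring
  have hgeo : Summable fun n : ℕ => KK * ρ^n :=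
    (summable_geometric_of_lt_one hρpos.le (by linarith)).mul_left KK
  have hLnonneg : ∀ n, 0 ≤ L n := by
    intro n
    rw [hL]
    simp only []
    have h1 : 0 < y := by linarith
    have h2 : 0 < y - x := by linarith
    positivity
  have hLsum : Summable L := Summable.of_nonneg_of_le hLnonneg hLgeom hgeo
  have hLtsum : ∑' n, L n ≤ KK * 2 := by
    calc ∑' n, L n ≤ ∑' n : ℕ, KK * ρ^n := Summable.tsum_le_tsum hLgeom hLsum hgeo
      _ = KK * (1-ρ)⁻¹ := by rw [tsum_mul_left, tsum_geometric_of_lt_one hρpos.le (by linarith)]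
      _ ≤ KK * 2 := by
          apply mul_le_mul_of_nonneg_left _ hKKpos.le
          rw [show (2:ℝ) = (1/2)⁻¹ by norm_num]
          apply inv_anti₀ (by norm_num)
          linarith
  -- summability of D
  have hDsum : Summable D := ((hQx1.sub hQy1).add (hQ1x.sub hQ1y)).congr (fun n => by rw [hD])
  -- tsum of D equals Q differences
  have s1 : (∑' n : ℕ, (Real.exp (-c*((x+1)+(n:ℝ))^2) - Real.exp (-c*((y+1)+(n:ℝ))^2)))
      = Q c (x+1) - Q c (y+1) := Summable.tsum_sub hQx1 hQy1
  have s2 : (∑' n : ℕ, (Real.exp (-c*((1-x)+(n:ℝ))^2) - Real.exp (-c*((1-y)+(n:ℝ))^2)))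
      = Q c (1-x) - Q c (1-y) := Summable.tsum_sub hQ1x hQ1y
  have s3 : (∑' n : ℕ, D n)
      = (∑' n : ℕ, (Real.exp (-c*((x+1)+(n:ℝ))^2) - Real.exp (-c*((y+1)+(n:ℝ))^2)))
        + ∑' n : ℕ, (Real.exp (-c*((1-x)+(n:ℝ))^2) - Real.exp (-c*((1-y)+(n:ℝ))^2)) :=
    Summable.tsum_add (hQx1.sub hQy1) (hQ1x.sub hQ1y)
  -- lower bound for ∑' D
  have hDlow : -(∑' n, L n) ≤ ∑' n, D n := by
    have := Summable.tsum_le_tsum hd hLsum.neg hDsum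
    rwa [tsum_neg] at this
  -- the gain
  have hgain : c*(y-x)*y*Real.exp (-c*(1/25)) ≤ Real.exp (-c*x^2) - Real.exp (-c*y^2) := by
    have e4 : Real.exp (-c*x^2) = Real.exp (-c*y^2) * Real.exp (c*(y^2-x^2)) := by
      rw [← Real.exp_add]; congr 1; ring
    have h5 := Real.add_one_le_exp (c*(y^2-x^2))
    have h6 : Real.exp (-c*(1/25)) ≤ Real.exp (-c*y^2) := by
      apply Real.exp_le_exp.mpr
      have hysq : y^2 ≤ 1/25 := by nlinarith
      nlinarith [mul_le_mul_of_nonneg_left hysq hcpos.le]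
    have h7 : c*(y-x)*y ≤ c*(y^2-x^2) := by
      nlinarith [mul_nonneg (mul_nonneg hcpos.le (sub_pos.mpr hxy).le) hx]
    have h8 : 0 < Real.exp (-c*y^2) := Real.exp_pos _
    have h9 : Real.exp (-c*y^2) * (c*(y^2-x^2)) ≤ Real.exp (-c*x^2) - Real.exp (-c*y^2) := by
      rw [e4]; nlinarith [h8, h5]
    have h10 : c*(y-x)*y*Real.exp (-c*(1/25)) ≤ (c*(y^2-x^2)) * Real.exp (-c*y^2) := by
      apply mul_le_mul h7 h6 (Real.exp_pos _).le
      have := mul_nonneg (sub_pos.mpr hxy).le (by linarith : (0:ℝ) ≤ y + x)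
      nlinarith [mul_nonneg hcpos.le this]
    nlinarith [h9, h10]
  -- numeric comparison
  have hnum : KK * 2 < c*(y-x)*y*Real.exp (-c*(1/25)) := by
    have hid : KK * 2 = (c*(y-x)*y*Real.exp (-c*(1/25))) * (16*c*Real.exp (-(3/5)*c)) := by
      rw [hKK]; ring
    rw [hid]
    have hpos : 0 < c*(y-x)*y*Real.exp (-c*(1/25)) := by
      have h1 : 0 < y := by linarith
      have h2 : 0 < y - x := by linarith
      positivity
    nth_rewrite 2 [← mul_one (c*(y-x)*y*Real.exp (-c*(1/25)))]
    exact mul_lt_mul_of_pos_left (num1 hc) hpos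
  -- assemble
  have hPx := P_eq_A hcpos x
  have hPy := P_eq_A hcpos y
  have : P c x - P c y > 0 := by
    have hsum_eq : P c x - P c y = (Real.exp (-c*x^2) - Real.exp (-c*y^2)) + ∑' n, D n := by
      rw [hPx, hPy, s3, s1, s2]; ring
    nlinarith [hsum_eq, hDlow, hLtsum, hgain, hnum]
  linarith

lemma abs_sin_nat_mul_le (θ : ℝ) : ∀ n : ℕ, |Real.sin ((n:ℝ)*θ)| ≤ (n:ℝ)*|Real.sin θ| := by
  intro n
  induction n with
  | zero => simp
  | succ n ih =>
    have h1 : ((n:ℝ)+1)*θ = (n:ℝ)*θ + θ := by ring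
    push_cast
    rw [h1, Real.sin_add]
    calc |Real.sin ((n:ℝ)*θ) * Real.cos θ + Real.cos ((n:ℝ)*θ) * Real.sin θ|
        ≤ |Real.sin ((n:ℝ)*θ) * Real.cos θ| + |Real.cos ((n:ℝ)*θ) * Real.sin θ| := abs_add_le _ _
      _ ≤ |Real.sin ((n:ℝ)*θ)| + |Real.sin θ| := by
          rw [abs_mul, abs_mul]
          have c1 := Real.abs_cos_le_one θ
          have c2 := Real.abs_cos_le_one ((n:ℝ)*θ)
          have s1 := abs_nonneg (Real.sin ((n:ℝ)*θ))
          have s2 := abs_nonneg (Real.sin θ)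
          nlinarith
      _ ≤ (n:ℝ)*|Real.sin θ| + |Real.sin θ| := by linarith
      _ = ((n:ℝ)+1)*|Real.sin θ| := by ring

lemma two_pow_bound : ∀ n : ℕ, ((n:ℝ)+2) ≤ 2*(3/2)^n := by
  intro n
  induction n with
  | zero => norm_num
  | succ n ih =>
    have h : (2:ℝ)*(3/2)^(n+1) = (3/2)*(2*(3/2)^n) := by ring
    push_cast
    rw [h]
    nlinarith [ih, Nat.cast_nonneg (α := ℝ) n]

lemma sq2_bound (n : ℕ) : ((n:ℝ)+2)^2 ≤ 4*(9/4)^n := by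
  have h := two_pow_bound n
  have h2 : (0:ℝ) ≤ (n:ℝ)+2 := by positivity
  have h3 : ((n:ℝ)+2)^2 ≤ (2*(3/2)^n)^2 := by nlinarith
  calc ((n:ℝ)+2)^2 ≤ (2*(3/2)^n)^2 := h3
    _ = 4*((3/2)^n)^2 := by ring
    _ = 4*(9/4)^n := by rw [← pow_mul, show (9/4 : ℝ) = (3/2)^2 by norm_num, ← pow_mul, mul_comm 2 n]

lemma exp_two_gt : (25/4:ℝ) < Real.exp 2 := by
  have h : (2.7182:ℝ) < Real.exp 1 := by have := Real.exp_one_gt_d9; linarith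
  have h2 : Real.exp 2 = Real.exp 1 * Real.exp 1 := by rw [← Real.exp_add]; norm_num
  nlinarith

lemma tail_term_bound {t : ℝ} (hT : 1/4 ≤ t) (n : ℕ) :
    ((n:ℝ)+2)^2 * Real.exp (-π*((n:ℝ)+2)^2*t)
      ≤ Real.exp (-π*t) * (4*Real.exp (-2:ℝ)) * ((9/4)*Real.exp (-2:ℝ))^n := by
  have hπ : (3.1415:ℝ) < π := by have := Real.pi_gt_d6; linarith
  have hn : (0:ℝ) ≤ (n:ℝ) := Nat.cast_nonneg n
  have h1 : Real.exp (-π*((n:ℝ)+2)^2*t) = Real.exp (-π*t) * Real.exp (-π*(((n:ℝ)+2)^2-1)*t) := by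
    rw [← Real.exp_add]; congr 1; ring
  have h2 : Real.exp (-π*(((n:ℝ)+2)^2-1)*t) ≤ Real.exp (-(2:ℝ)*((n:ℝ)+1)) := by
    apply Real.exp_le_exp.mpr
    have h3 : 3*((n:ℝ)+1) ≤ ((n:ℝ)+2)^2 - 1 := by nlinarith
    have h4 : (2:ℝ)/3 ≤ π*t := by nlinarith
    have h5 : (2:ℝ)*((n:ℝ)+1) ≤ (π*t)*(((n:ℝ)+2)^2-1) := by
      calc (2:ℝ)*((n:ℝ)+1) = (2/3)*(3*((n:ℝ)+1)) := by ring
        _ ≤ (2/3)*(((n:ℝ)+2)^2-1) := by nlinarith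
        _ ≤ (π*t)*(((n:ℝ)+2)^2-1) := by nlinarith
    nlinarith
  have h6 : Real.exp (-(2:ℝ)*((n:ℝ)+1)) = Real.exp (-2:ℝ) * (Real.exp (-2:ℝ))^n := by
    rw [← Real.exp_nat_mul, ← Real.exp_add]; congr 1; ring
  calc ((n:ℝ)+2)^2 * Real.exp (-π*((n:ℝ)+2)^2*t)
      = ((n:ℝ)+2)^2 * (Real.exp (-π*t) * Real.exp (-π*(((n:ℝ)+2)^2-1)*t)) := by rw [h1]
    _ ≤ ((n:ℝ)+2)^2 * (Real.exp (-π*t) * Real.exp (-(2:ℝ)*((n:ℝ)+1))) := by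
        apply mul_le_mul_of_nonneg_left _ (by positivity)
        exact mul_le_mul_of_nonneg_left h2 (Real.exp_pos _).le
    _ ≤ (4*(9/4)^n) * (Real.exp (-π*t) * Real.exp (-(2:ℝ)*((n:ℝ)+1))) := by
        apply mul_le_mul_of_nonneg_right (sq2_bound n) (by positivity)
    _ = Real.exp (-π*t) * (4*Real.exp (-2:ℝ)) * ((9/4)*Real.exp (-2:ℝ))^n := by
        rw [h6, mul_pow]; ring

lemma num2 {t : ℝ} (hT : 1/4 ≤ t) :
    (∑' n : ℕ, ((n:ℝ)+2)^2 * Real.exp (-π*((n:ℝ)+2)^2*t)) < Real.exp (-π*t) := by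
  set ρ := (9/4)*Real.exp (-2:ℝ) with hρ
  have hE := exp_two_gt
  have hei : Real.exp (-2:ℝ) = (Real.exp 2)⁻¹ := by rw [← Real.exp_neg]
  have he : Real.exp (-2:ℝ) < 4/25 := by
    rw [hei]
    have := Real.exp_pos 2
    rw [show (4:ℝ)/25 = (25/4)⁻¹ by norm_num]
    exact inv_strictAnti₀ (by norm_num) hE
  have hρpos : 0 < ρ := by rw [hρ]; positivity
  have hρlt : ρ < 9/25 := by rw [hρ]; nlinarith
  have hgeo : Summable fun n : ℕ => Real.exp (-π*t) * (4*Real.exp (-2:ℝ)) * ρ^n :=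
    (summable_geometric_of_lt_one hρpos.le (by linarith)).mul_left _
  have hterm_nonneg : ∀ n : ℕ, 0 ≤ ((n:ℝ)+2)^2 * Real.exp (-π*((n:ℝ)+2)^2*t) := by
    intro n; positivity
  have hsum : Summable fun n : ℕ => ((n:ℝ)+2)^2 * Real.exp (-π*((n:ℝ)+2)^2*t) :=
    Summable.of_nonneg_of_le hterm_nonneg (fun n => tail_term_bound hT n) hgeo
  calc (∑' n : ℕ, ((n:ℝ)+2)^2 * Real.exp (-π*((n:ℝ)+2)^2*t))
      ≤ ∑' n : ℕ, Real.exp (-π*t) * (4*Real.exp (-2:ℝ)) * ρ^n :=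
        Summable.tsum_le_tsum (fun n => tail_term_bound hT n) hsum hgeo
    _ = Real.exp (-π*t) * (4*Real.exp (-2:ℝ)) * (1-ρ)⁻¹ := by
        rw [tsum_mul_left, tsum_geometric_of_lt_one hρpos.le (by linarith)]
    _ < Real.exp (-π*t) := by
        have h1 : (1-ρ)⁻¹ < (16/25:ℝ)⁻¹ := by
          apply inv_strictAnti₀ (by norm_num)
          linarith
        have h2 : (0:ℝ) < (1-ρ)⁻¹ := by
          apply inv_pos.mpr; linarith
        have h3 : (4*Real.exp (-2:ℝ)) * (1-ρ)⁻¹ < 1 := by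
          have h4 : (4*Real.exp (-2:ℝ)) * (1-ρ)⁻¹ < (16/25:ℝ) * (25/16:ℝ) := by
            apply mul_lt_mul' _ _ _ (by norm_num)
            · linarith
            · rw [show (25/16:ℝ) = (16/25:ℝ)⁻¹ by norm_num]; exact h1
            · positivity
          norm_num at h4
          linarith
        nlinarith [Real.exp_pos (-π*t), h3]

lemma r_even (t β m : ℝ) :
    Real.exp (-π*(-m)^2*t) * Real.cos (2*π*(-m)*β)
      = Real.exp (-π*m^2*t) * Real.cos (2*π*m*β) := by
  rw [neg_sq, show 2*π*(-m)*β = -(2*π*m*β) by ring, Real.cos_neg]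

/-- ℕ-indexed Fourier-side summability. -/
lemma summable_fourierNat {t : ℝ} (ht : 0 < t) (β : ℝ) :
    Summable fun n : ℕ => Real.exp (-π*((n:ℝ)+1)^2*t) * Real.cos (2*π*((n:ℝ)+1)*β) := by
  refine Summable.of_norm_bounded
    (g := fun n : ℕ => Real.exp (-π*t) * (Real.exp (-π*t))^n) ?_ ?_
  · exact (summable_geometric_of_lt_one (Real.exp_pos _).le
      (Real.exp_lt_one_iff.mpr (by nlinarith [Real.pi_pos]))).mul_left _
  · intro n
    rw [Real.norm_eq_abs, abs_mul, Real.abs_exp]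
    rw [← Real.exp_nat_mul, ← Real.exp_add]
    have hn : (0:ℝ) ≤ (n:ℝ) := Nat.cast_nonneg n
    calc Real.exp (-π*((n:ℝ)+1)^2*t) * |Real.cos (2*π*((n:ℝ)+1)*β)|
        ≤ Real.exp (-π*((n:ℝ)+1)^2*t) * 1 :=
          mul_le_mul_of_nonneg_left (Real.abs_cos_le_one _) (Real.exp_pos _).le
      _ ≤ Real.exp (-π*t + (n:ℝ)*(-π*t)) := by
          rw [mul_one]
          apply Real.exp_le_exp.mpr
          nlinarith [mul_nonneg (mul_pos Real.pi_pos ht).le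
            (mul_nonneg hn (by linarith : (0:ℝ) ≤ (n:ℝ)+1))]

/-- Decomposition of the ℤ-sum. -/
lemma theta_decomp {t : ℝ} (ht : 0 < t) (β : ℝ)
    (hR : Summable fun k : ℤ => Real.exp (-π*(k:ℝ)^2*t) * Real.cos (2*π*(k:ℝ)*β)) :
    (∑' k : ℤ, Real.exp (-π*(k:ℝ)^2*t) * Real.cos (2*π*(k:ℝ)*β))
      = 2*(∑' n : ℕ, Real.exp (-π*((n:ℝ)+1)^2*t) * Real.cos (2*π*((n:ℝ)+1)*β)) + 1 := by
  have hbase := summable_fourierNat ht β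
  have hcong1 : ∀ n : ℕ,
      Real.exp (-π*((n:ℝ)+1)^2*t) * Real.cos (2*π*((n:ℝ)+1)*β)
      = (fun k : ℤ => Real.exp (-π*(k:ℝ)^2*t) * Real.cos (2*π*(k:ℝ)*β)) (n+1) := by
    intro n
    show _ = Real.exp (-π*(((n:ℤ)+1 : ℤ):ℝ)^2*t) * Real.cos (2*π*(((n:ℤ)+1 : ℤ):ℝ)*β)
    push_cast
    ring_nf
  have hcong2 : ∀ n : ℕ,
      Real.exp (-π*((n:ℝ)+1)^2*t) * Real.cos (2*π*((n:ℝ)+1)*β)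
      = (fun k : ℤ => Real.exp (-π*(k:ℝ)^2*t) * Real.cos (2*π*(k:ℝ)*β)) (-(n+1)) := by
    intro n
    show _ = Real.exp (-π*((-((n:ℤ)+1) : ℤ):ℝ)^2*t) * Real.cos (2*π*((-((n:ℤ)+1) : ℤ):ℝ)*β)
    have hc : ((-((n:ℤ)+1) : ℤ):ℝ) = -((n:ℝ)+1) := by push_cast; ring
    rw [hc, r_even]
  have h1 : Summable fun n : ℕ =>
      (fun k : ℤ => Real.exp (-π*(k:ℝ)^2*t) * Real.cos (2*π*(k:ℝ)*β)) (n+1) :=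
    hbase.congr hcong1
  have h2 : Summable fun n : ℕ =>
      (fun k : ℤ => Real.exp (-π*(k:ℝ)^2*t) * Real.cos (2*π*(k:ℝ)*β)) (-(n+1)) :=
    hbase.congr hcong2
  have hmain := tsum_of_add_one_of_neg_add_one
    (f := fun k : ℤ => Real.exp (-π*(k:ℝ)^2*t) * Real.cos (2*π*(k:ℝ)*β)) h1 h2
  have eA : (∑' n : ℕ, (fun k : ℤ => Real.exp (-π*(k:ℝ)^2*t) * Real.cos (2*π*(k:ℝ)*β)) (n+1))
      = ∑' n : ℕ, Real.exp (-π*((n:ℝ)+1)^2*t) * Real.cos (2*π*((n:ℝ)+1)*β) :=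
    tsum_congr fun n => (hcong1 n).symm
  have eB : (∑' n : ℕ, (fun k : ℤ => Real.exp (-π*(k:ℝ)^2*t) * Real.cos (2*π*(k:ℝ)*β)) (-(n+1)))
      = ∑' n : ℕ, Real.exp (-π*((n:ℝ)+1)^2*t) * Real.cos (2*π*((n:ℝ)+1)*β) :=
    tsum_congr fun n => (hcong2 n).symm
  have e0 : (fun k : ℤ => Real.exp (-π*(k:ℝ)^2*t) * Real.cos (2*π*(k:ℝ)*β)) 0 = 1 := by
    norm_num
  rw [hmain, eA, eB, show Real.exp (-π*((0:ℤ):ℝ)^2*t) * Real.cos (2*π*((0:ℤ):ℝ)*β) = 1 from e0]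
  ring

lemma fourier_anti {t : ℝ} (ht : 0 < t) (hT : 1/4 ≤ t) {β₁ β₂ : ℝ}
    (h0 : 0 ≤ β₁) (h12 : β₁ < β₂) (h2 : β₂ ≤ 1/2)
    (hR1 : Summable fun k : ℤ => Real.exp (-π*(k:ℝ)^2*t) * Real.cos (2*π*(k:ℝ)*β₁))
    (hR2 : Summable fun k : ℤ => Real.exp (-π*(k:ℝ)^2*t) * Real.cos (2*π*(k:ℝ)*β₂)) :
    (∑' k : ℤ, Real.exp (-π*(k:ℝ)^2*t) * Real.cos (2*π*(k:ℝ)*β₂))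
      < ∑' k : ℤ, Real.exp (-π*(k:ℝ)^2*t) * Real.cos (2*π*(k:ℝ)*β₁) := by
  rw [theta_decomp ht β₁ hR1, theta_decomp ht β₂ hR2]
  have key : (∑' n : ℕ, Real.exp (-π*((n:ℝ)+1)^2*t) * Real.cos (2*π*((n:ℝ)+1)*β₂))
      < ∑' n : ℕ, Real.exp (-π*((n:ℝ)+1)^2*t) * Real.cos (2*π*((n:ℝ)+1)*β₁) := by
    set σ := π*(β₁+β₂) with hσ
    set δ := π*(β₂-β₁) with hδ
    have hπ := Real.pi_pos
    have hσpos : 0 < Real.sin σ := by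
      apply Real.sin_pos_of_pos_of_lt_pi
      · rw [hσ]; nlinarith
      · rw [hσ]; nlinarith
    have hδpos : 0 < Real.sin δ := by
      apply Real.sin_pos_of_pos_of_lt_pi
      · rw [hδ]; nlinarith
      · rw [hδ]; nlinarith
    set w : ℕ → ℝ := fun n =>
      2*Real.exp (-π*((n:ℝ)+1)^2*t) * (Real.sin (((n:ℝ)+1)*σ) * Real.sin (((n:ℝ)+1)*δ)) with hw
    have hwdiff : ∀ n : ℕ,
        Real.exp (-π*((n:ℝ)+1)^2*t) * Real.cos (2*π*((n:ℝ)+1)*β₁)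
        - Real.exp (-π*((n:ℝ)+1)^2*t) * Real.cos (2*π*((n:ℝ)+1)*β₂) = w n := by
      intro n
      rw [hw]
      simp only []
      rw [← mul_sub, Real.cos_sub_cos]
      rw [show (2*π*((n:ℝ)+1)*β₁ + 2*π*((n:ℝ)+1)*β₂)/2 = ((n:ℝ)+1)*σ by rw [hσ]; ring]
      rw [show (2*π*((n:ℝ)+1)*β₁ - 2*π*((n:ℝ)+1)*β₂)/2 = -(((n:ℝ)+1)*δ) by rw [hδ]; ring]
      rw [Real.sin_neg]
      ring
    have hs1 := summable_fourierNat ht β₁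
    have hs2 := summable_fourierNat ht β₂
    have hwsum : Summable w := (hs1.sub hs2).congr hwdiff
    have hdiff : (∑' n : ℕ, Real.exp (-π*((n:ℝ)+1)^2*t) * Real.cos (2*π*((n:ℝ)+1)*β₁))
        - (∑' n : ℕ, Real.exp (-π*((n:ℝ)+1)^2*t) * Real.cos (2*π*((n:ℝ)+1)*β₂))
        = ∑' n : ℕ, w n := by
      rw [← Summable.tsum_sub hs1 hs2]
      exact tsum_congr hwdiff
    suffices h : 0 < ∑' n : ℕ, w n by linarith [hdiff]
    rw [Summable.tsum_eq_zero_add hwsum]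
    set M : ℕ → ℝ := fun n =>
      2*(Real.sin σ * Real.sin δ) * (((n:ℝ)+2)^2 * Real.exp (-π*((n:ℝ)+2)^2*t)) with hM
    have hw0 : w 0 = 2*Real.exp (-π*t) * (Real.sin σ * Real.sin δ) := by
      rw [hw]; norm_num
    have hbound : ∀ n : ℕ, -(M n) ≤ w (n+1) := by
      intro n
      have hc2 : (((n+1:ℕ)):ℝ)+1 = (n:ℝ)+2 := by push_cast; ring
      have habs : |w (n+1)| ≤ M n := by
        rw [hw, hM]
        simp only []
        rw [hc2]
        rw [abs_mul, abs_mul, abs_mul]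
        have e1 : |(2:ℝ)| = 2 := by norm_num
        rw [e1, Real.abs_exp]
        have hsin1 : |Real.sin (((n:ℝ)+2)*σ)| ≤ ((n:ℝ)+2)*Real.sin σ := by
          have := abs_sin_nat_mul_le σ (n+2)
          push_cast at this
          rwa [abs_of_pos hσpos] at this
        have hsin2 : |Real.sin (((n:ℝ)+2)*δ)| ≤ ((n:ℝ)+2)*Real.sin δ := by
          have := abs_sin_nat_mul_le δ (n+2)
          push_cast at this
          rwa [abs_of_pos hδpos] at this
        have hn2 : (0:ℝ) ≤ (n:ℝ)+2 := by positivity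
        have hprod : |Real.sin (((n:ℝ)+2)*σ)| * |Real.sin (((n:ℝ)+2)*δ)|
            ≤ (((n:ℝ)+2)*Real.sin σ) * (((n:ℝ)+2)*Real.sin δ) :=
          mul_le_mul hsin1 hsin2 (abs_nonneg _) (by positivity)
        calc 2*Real.exp (-π*((n:ℝ)+2)^2*t) * (|Real.sin (((n:ℝ)+2)*σ)| * |Real.sin (((n:ℝ)+2)*δ)|)
            ≤ 2*Real.exp (-π*((n:ℝ)+2)^2*t) * ((((n:ℝ)+2)*Real.sin σ) * (((n:ℝ)+2)*Real.sin δ)) := by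
              apply mul_le_mul_of_nonneg_left hprod (by positivity)
          _ = 2*(Real.sin σ * Real.sin δ) * (((n:ℝ)+2)^2 * Real.exp (-π*((n:ℝ)+2)^2*t)) := by ring
      have := neg_abs_le (w (n+1))
      linarith
    have hNsum : Summable fun n : ℕ => ((n:ℝ)+2)^2 * Real.exp (-π*((n:ℝ)+2)^2*t) := by
      refine Summable.of_nonneg_of_le (fun n => by positivity) (fun n => tail_term_bound hT n) ?_
      have hE := exp_two_gt
      have hρpos : (0:ℝ) < (9/4)*Real.exp (-2:ℝ) := by positivity
      have hρlt : (9/4)*Real.exp (-2:ℝ) < 1 := by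
        have hei : Real.exp (-2:ℝ) = (Real.exp 2)⁻¹ := by rw [← Real.exp_neg]
        rw [hei]
        have h25 : (0:ℝ) < Real.exp 2 := Real.exp_pos 2
        rw [mul_inv_lt_iff₀ h25]
        nlinarith [hE]
      exact (summable_geometric_of_lt_one hρpos.le hρlt).mul_left _
    have hMsum : Summable M := by
      rw [hM]
      exact hNsum.mul_left _
    have hwsucc : Summable fun n : ℕ => w (n+1) := (summable_nat_add_iff 1).mpr hwsum
    have htail : -(2*(Real.sin σ * Real.sin δ)
        * ∑' n : ℕ, ((n:ℝ)+2)^2 * Real.exp (-π*((n:ℝ)+2)^2*t)) ≤ ∑' n : ℕ, w (n+1) := by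
      have h5 := Summable.tsum_le_tsum hbound hMsum.neg hwsucc
      rw [tsum_neg] at h5
      have h6 : ∑' n, M n = 2*(Real.sin σ * Real.sin δ)
          * ∑' n : ℕ, ((n:ℝ)+2)^2 * Real.exp (-π*((n:ℝ)+2)^2*t) := by
        rw [hM, tsum_mul_left]
      linarith [h5, h6.le, h6.ge]
    have hnum := num2 hT
    have hS : 0 < Real.sin σ * Real.sin δ := mul_pos hσpos hδpos
    have hfin : 0 < w 0 + ∑' n : ℕ, w (n+1) := by
      rw [hw0]
      nlinarith [htail, hnum, hS]
    exact hfin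
  linarith

lemma gauss_anti {c : ℝ} (hc : 4*π ≤ c) {x y : ℝ} (hx : 0 ≤ x) (hxy : x < y) (hy : y ≤ 1/2) :
    P c y < P c x := by
  rcases le_or_gt y (1/5) with h | h
  · exact caseA hc hx hxy h
  · rcases le_or_gt (1/5) x with h' | h'
    · exact caseB hc h' hxy hy
    · calc P c y < P c (1/5) := caseB hc (le_refl _) h hy
        _ < P c x := caseA hc hx h' (le_refl _)

end JT3

/-- For every fixed `t > 0`, the function `β ↦ ϑ₃(β; it)` is real-valued
(it equals `∑_{k∈ℤ} e^{−πk²t} cos(2πkβ)`) and strictly decreasing on `[0, 1/2]`. -/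
theorem jacobiTheta3_strict_anti (t : ℝ) (ht : 0 < t)
    (Θ : ℝ → ℝ)
    (hΘ : ∀ β : ℝ, Θ β = ∑' k : ℤ, Real.exp (-π * (k : ℝ) ^ 2 * t) * Real.cos (2 * π * k * β)) :
    (∀ β : ℝ,
      (∑' k : ℤ, Complex.exp (-(π : ℂ) * (k : ℂ) ^ 2 * (t : ℂ) +
        2 * (π : ℂ) * Complex.I * (k : ℂ) * (β : ℂ))) = (Θ β : ℂ)) ∧
    (∀ β₁ β₂ : ℝ, 0 ≤ β₁ → β₁ < β₂ → β₂ ≤ 1 / 2 → Θ β₂ < Θ β₁) := by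
  constructor
  · intro β
    rw [hΘ β]
    exact JT3.part1 ht β
  · intro β₁ β₂ h0 h12 h2
    have hsq : 0 < Real.sqrt t := Real.sqrt_pos.mpr ht
    have hθ : ∀ β : ℝ, Θ β = (Real.sqrt t)⁻¹ * JT3.P (π/t) β := by
      intro β
      rw [hΘ β, JT3.poisson ht β]
      rfl
    rcases le_or_gt t (1/4) with hsmall | hbig
    · have hc : 4*π ≤ π/t := by
        rw [le_div_iff₀ ht]
        nlinarith [Real.pi_pos]
      have hP : JT3.P (π/t) β₂ < JT3.P (π/t) β₁ := JT3.gauss_anti hc h0 h12 h2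
      rw [hθ β₁, hθ β₂]
      exact mul_lt_mul_of_pos_left hP (inv_pos.mpr hsq)
    · rw [hΘ β₁, hΘ β₂]
      exact JT3.fourier_anti ht hbig.le h0 h12 h2
        (JT3.summable_fourier ht β₁) (JT3.summable_fourier ht β₂)
end

section
/- For every α > 0 and every β ∈ ℝ, ∑_{n∈ℤ} exp(−πα(n + 1/2)²) ≤ ∑_{n∈ℤ} exp(−πα(n + β)²), with equality if and only if β − 1/2 ∈ ℤ. In other words, for each α > 0 the translated theta function β ↦ θ_{ℤ+β}(α) attains its minimum exactly at the points congruent to 1/2 modulo 1. -/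
open scoped Real
open Real

namespace ThetaMin

lemma summable_nat {a : ℝ} (ha : 0 < a) (b : ℝ) :
    Summable fun n : ℕ => Real.exp (-π * a * ((n : ℝ) + b) ^ 2) := by
  have hgeo : Summable fun n : ℕ => Real.exp (-π * a) ^ n :=
    summable_geometric_of_lt_one (Real.exp_nonneg _)
      (Real.exp_lt_one_iff.2 (by nlinarith [Real.pi_pos]))
  refine hgeo.of_norm_bounded_eventually_nat ?_
  filter_upwards [Filter.eventually_ge_atTop (⌈2 * |b| + 4⌉₊)] with n hn
  have hn' : 2 * |b| + 4 ≤ (n : ℝ) := le_trans (Nat.le_ceil _) (by exact_mod_cast Nat.cast_le.2 hn)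
  rw [Real.norm_eq_abs, abs_of_pos (Real.exp_pos _), ← Real.exp_nat_mul]
  rw [Real.exp_le_exp]
  have hb1 : -|b| ≤ b := neg_abs_le b
  have hb2 : 0 ≤ |b| := abs_nonneg b
  have h3 : (n : ℝ)/2 + 2 ≤ (n : ℝ) + b := by linarith
  have h4 : ((n : ℝ)/2 + 2)^2 ≤ ((n : ℝ) + b)^2 := by nlinarith
  nlinarith [mul_pos Real.pi_pos ha, mul_nonneg (mul_pos Real.pi_pos ha).le (sq_nonneg ((n:ℝ)/2 - 2))]

noncomputable def th (α β : ℝ) : ℝ := ∑' n : ℤ, Real.exp (-π * α * ((n : ℝ) + β) ^ 2)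

lemma th_add_int (α β : ℝ) (k : ℤ) : th α (β + k) = th α β := by
  rw [th, th, ← (Equiv.addRight k).tsum_eq (fun n : ℤ => Real.exp (-π * α * ((n : ℝ) + β) ^ 2))]
  refine tsum_congr fun n => ?_
  simp only [Equiv.coe_addRight]
  congr 1
  push_cast
  ring

lemma th_neg (α β : ℝ) : th α (-β) = th α β := by
  rw [th, th, ← (Equiv.neg ℤ).tsum_eq (fun n : ℤ => Real.exp (-π * α * ((n : ℝ) + β) ^ 2))]
  refine tsum_congr fun n => ?_
  simp only [Equiv.neg_apply]
  congr 1
  push_cast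
  ring

lemma th_split {α : ℝ} (hα : 0 < α) (b : ℝ) :
    th α b = ∑' n : ℕ, (Real.exp (-π * α * ((n : ℝ) + b) ^ 2)
      + Real.exp (-π * α * ((n : ℝ) + (1 - b)) ^ 2)) := by
  have h1 := summable_nat hα b
  have h2 := summable_nat hα (1 - b)
  have h2' : Summable fun n : ℕ => Real.exp (-π * α * (((-((n : ℤ) + 1) : ℤ) : ℝ) + b) ^ 2) := by
    refine h2.congr fun n => ?_
    congr 1
    push_cast
    ring
  have hsplit := tsum_of_nat_of_neg_add_one
    (f := fun n : ℤ => Real.exp (-π * α * ((n : ℝ) + b) ^ 2)) h1 h2'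
  have hre : (∑' n : ℕ, Real.exp (-π * α * (((-((n : ℤ) + 1) : ℤ) : ℝ) + b) ^ 2))
      = ∑' n : ℕ, Real.exp (-π * α * ((n : ℝ) + (1 - b)) ^ 2) :=
    tsum_congr fun n => by congr 1; push_cast; ring
  rw [th, hsplit, hre, Summable.tsum_add h1 h2]
  refine congrArg₂ (· + ·) (tsum_congr fun n => ?_) rfl
  push_cast
  ring_nf

lemma exp_mul_lt_cosh {x t : ℝ} (ht : 0 < t) (ht2 : t ≤ 1/2) (hx : 6 * t ≤ x) :
    Real.exp (x * t) < Real.cosh x := by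
  have hx0 : 0 < x := lt_of_lt_of_le (by linarith) hx
  rcases le_or_gt 2 x with h2 | h2
  · have h3 : Real.exp 1 * Real.exp (x * t) ≤ Real.exp x := by
      rw [← Real.exp_add, Real.exp_le_exp]
      nlinarith
    have he : (2:ℝ) < Real.exp 1 := by nlinarith [Real.exp_one_gt_d9]
    rw [Real.cosh_eq]
    nlinarith [Real.exp_pos (x*t), Real.exp_pos (-x)]
  · have hxt : x * t ≤ x^2 / 6 := by nlinarith
    have hd : 0 < 1 - x * t := by nlinarith
    have h1 : Real.exp (x*t) * (1 - x*t) ≤ 1 := by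
      have ha := Real.add_one_le_exp (-(x*t))
      rw [Real.exp_neg] at ha
      have h0 := Real.exp_pos (x*t)
      calc Real.exp (x*t) * (1 - x*t) ≤ Real.exp (x*t) * (Real.exp (x*t))⁻¹ :=
            mul_le_mul_of_nonneg_left (by linarith) h0.le
        _ = 1 := mul_inv_cancel₀ h0.ne'
    have h2' : 1 + x^2/2 < Real.cosh x := by
      have hs : x/2 < Real.sinh (x/2) := Real.self_lt_sinh_iff.2 (by linarith)
      have hsq := Real.cosh_sq (x/2)
      have h2m : Real.cosh (2 * (x/2)) = Real.cosh (x/2)^2 + Real.sinh (x/2)^2 :=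
        Real.cosh_two_mul _
      rw [show 2*(x/2) = x by ring] at h2m
      have hss : (x/2)^2 < Real.sinh (x/2)^2 := by nlinarith
      nlinarith
    have hx4 : x^2 < 4 := by nlinarith
    have h7 : x*t*(1+x^2/2) ≤ x^2/6*(1+x^2/2) :=
      mul_le_mul_of_nonneg_right hxt (by positivity)
    have h6 : 1 < (1 + x^2/2) * (1 - x*t) := by
      nlinarith [sq_nonneg x, mul_lt_mul_of_pos_right hx4 (pow_pos hx0 2)]
    have h8 : Real.exp (x*t) * (1 - x*t) < Real.cosh x * (1 - x*t) := by
      have := mul_lt_mul_of_pos_right h2' hd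
      linarith
    exact lt_of_mul_lt_mul_right h8 hd.le

lemma conf_pointwise {α : ℝ} (hα2 : 2 ≤ α) {t : ℝ} (ht : 0 < t) (ht2 : t ≤ 1/2)
    (s : ℝ) (hs : 1/2 ≤ s) :
    2 * Real.exp (-π * α * s ^ 2) <
      Real.exp (-π * α * (s - t) ^ 2) + Real.exp (-π * α * (s + t) ^ 2) := by
  have hπ3 : (3:ℝ) < π := Real.pi_gt_three
  have key : Real.exp (π * α * t ^ 2) < Real.cosh (2 * π * α * s * t) := by
    have hα0 : (0:ℝ) < α := by linarith
    have hp1 : 0 < π * α * t := mul_pos (mul_pos Real.pi_pos hα0) ht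
    have hp2 : 0 < 2 * π * α * s * t :=
      mul_pos (mul_pos (mul_pos (mul_pos two_pos Real.pi_pos) hα0) (by linarith)) ht
    have h6a : (6:ℝ) < π * α := by nlinarith
    have h1 : Real.exp ((π*α*t) * t) < Real.cosh (π * α * t) :=
      exp_mul_lt_cosh ht ht2 (by nlinarith [mul_lt_mul_of_pos_right h6a ht])
    have h2 : Real.cosh (π*α*t) ≤ Real.cosh (2*π*α*s*t) := by
      rw [Real.cosh_le_cosh, abs_of_pos hp1, abs_of_pos hp2]
      nlinarith [hp1]
    calc Real.exp (π*α*t^2) = Real.exp ((π*α*t)*t) := by ring_nf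
      _ < _ := lt_of_lt_of_le h1 h2
  have e1 : Real.exp (-π*α*(s-t)^2)
      = Real.exp (-π*α*s^2) * Real.exp (-π*α*t^2) * Real.exp (2*π*α*s*t) := by
    rw [← Real.exp_add, ← Real.exp_add]; congr 1; ring
  have e2 : Real.exp (-π*α*(s+t)^2)
      = Real.exp (-π*α*s^2) * Real.exp (-π*α*t^2) * Real.exp (-(2*π*α*s*t)) := by
    rw [← Real.exp_add, ← Real.exp_add]; congr 1; ring
  have hA : Real.exp (-π*α*t^2) * Real.exp (π*α*t^2) = 1 := by
    rw [← Real.exp_add]; simp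
  have h5 : 1 < Real.exp (-π*α*t^2) * Real.cosh (2*π*α*s*t) := by
    nlinarith [Real.exp_pos (-π*α*t^2)]
  have hcosh : Real.exp (2*π*α*s*t) + Real.exp (-(2*π*α*s*t)) = 2 * Real.cosh (2*π*α*s*t) := by
    rw [Real.cosh_eq]; ring
  have hE := Real.exp_pos (-π*α*s^2)
  have h7 := mul_lt_mul_of_pos_left h5 hE
  calc 2 * Real.exp (-π*α*s^2) = 2 * (Real.exp (-π*α*s^2) * 1) := by ring
    _ < 2 * (Real.exp (-π*α*s^2) * (Real.exp (-π*α*t^2) * Real.cosh (2*π*α*s*t))) := by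
        linarith
    _ = Real.exp (-π*α*s^2) * Real.exp (-π*α*t^2)
        * (Real.exp (2*π*α*s*t) + Real.exp (-(2*π*α*s*t))) := by rw [hcosh]; ring
    _ = Real.exp (-π * α * (s - t) ^ 2) + Real.exp (-π * α * (s + t) ^ 2) := by
        rw [e1, e2]; ring

lemma conf_strict {α : ℝ} (hα : 0 < α) (hα2 : 2 ≤ α) {t : ℝ} (ht : 0 < t) (ht2 : t ≤ 1/2) :
    th α (1/2) < th α (1/2 - t) := by
  rw [th_split hα (1/2), th_split hα (1/2 - t)]
  have key : ∀ n : ℕ, Real.exp (-π * α * ((n : ℝ) + 1/2) ^ 2)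
      + Real.exp (-π * α * ((n : ℝ) + (1 - 1/2)) ^ 2)
      < Real.exp (-π * α * ((n : ℝ) + (1/2 - t)) ^ 2)
      + Real.exp (-π * α * ((n : ℝ) + (1 - (1/2 - t))) ^ 2) := by
    intro n
    have e0 : (n : ℝ) + (1 - 1/2) = (n : ℝ) + 1/2 := by ring
    have e1 : (n : ℝ) + (1/2 - t) = ((n : ℝ) + 1/2) - t := by ring
    have e2 : (n : ℝ) + (1 - (1/2 - t)) = ((n : ℝ) + 1/2) + t := by ring
    rw [e0, e1, e2]
    have := conf_pointwise hα2 ht ht2 ((n : ℝ) + 1/2) (by linarith [show (0:ℝ) ≤ (n:ℝ) from Nat.cast_nonneg n])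
    linarith
  refine Summable.tsum_lt_tsum (i := 0) (fun n => (key n).le) (key 0) ?_ ?_
  · exact (summable_nat hα (1/2)).add (summable_nat hα (1 - 1/2))
  · exact (summable_nat hα (1/2 - t)).add (summable_nat hα (1 - (1/2 - t)))


lemma summable_int {a : ℝ} (ha : 0 < a) (b : ℝ) :
    Summable fun n : ℤ => Real.exp (-π * a * ((n : ℝ) + b) ^ 2) := by
  refine Summable.of_nat_of_neg (summable_nat ha b) (((summable_nat ha (-b)).congr fun n => ?_))
  congr 1
  push_cast
  ring

lemma summable_sq {a : ℝ} (ha : 0 < a) :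
    Summable fun n : ℤ => Real.exp (-π * a * (n : ℝ) ^ 2) :=
  (summable_int ha 0).congr fun n => by norm_num

lemma summable_cos {a : ℝ} (ha : 0 < a) (f : ℤ → ℝ) :
    Summable fun n : ℤ => Real.exp (-π * a * (n : ℝ) ^ 2) * Real.cos (f n) := by
  refine Summable.of_norm_bounded (summable_sq ha) fun n => ?_
  rw [Real.norm_eq_abs, abs_mul, abs_of_pos (Real.exp_pos _)]
  exact mul_le_of_le_one_right (Real.exp_pos _).le (abs_cos_le_one _)

lemma poisson {α : ℝ} (hα : 0 < α) (β : ℝ) :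
    th α β = (Real.sqrt α)⁻¹
      * ∑' n : ℤ, Real.exp (-π * (1/α) * (n : ℝ) ^ 2) * Real.cos (2 * π * β * n) := by
  have hα0 : (α : ℂ) ≠ 0 := Complex.ofReal_ne_zero.2 hα.ne'
  have ha : 0 < ((α : ℂ)⁻¹).re := by
    rw [← Complex.ofReal_inv, Complex.ofReal_re]
    positivity
  have key := Complex.tsum_exp_neg_quadratic ha (-(Complex.I * β))
  -- rewrite the right-hand inner sum as the config sum
  have hc1 : ∀ n : ℤ, Complex.exp (-π / ((α:ℂ)⁻¹) * ((n : ℂ) + Complex.I * (-(Complex.I * β))) ^ 2)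
      = ((Real.exp (-π * α * ((n : ℝ) + β) ^ 2) : ℝ) : ℂ) := by
    intro n
    rw [Complex.ofReal_exp]
    congr 1
    have hI : Complex.I * -(Complex.I * (β:ℂ)) = (β:ℂ) := by
      rw [mul_neg, ← mul_assoc, Complex.I_mul_I]
      ring
    rw [hI, div_eq_mul_inv, inv_inv]
    push_cast
    ring
  have hw : ((α:ℂ)⁻¹) ^ (1/2 : ℂ) = ((Real.sqrt α)⁻¹ : ℝ) := by
    rw [← Complex.ofReal_inv]
    rw [show (1/2 : ℂ) = ((1/2 : ℝ) : ℂ) by norm_num]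
    rw [← Complex.ofReal_cpow (by positivity) (1/2 : ℝ)]
    rw [Real.inv_rpow hα.le, ← Real.sqrt_eq_rpow]
  have hL : Summable fun n : ℤ =>
      Complex.exp (-π * ((α:ℂ)⁻¹) * (n:ℂ) ^ 2 + 2 * π * (-(Complex.I * β)) * (n:ℂ)) := by
    refine Summable.of_norm (((summable_sq (a := 1/α) (by positivity)).congr fun n => ?_))
    rw [Complex.norm_exp]
    congr 1
    have : (-π * ((α:ℂ)⁻¹) * (n:ℂ) ^ 2 + 2 * π * (-(Complex.I * β)) * (n:ℂ))
        = ((-π * (1/α) * (n:ℝ)^2 : ℝ) : ℂ) + ((-(2*π*β*n) : ℝ) : ℂ) * Complex.I := by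
      push_cast
      ring
    rw [this]
    simp only [Complex.add_re, Complex.ofReal_re, Complex.mul_I_re, Complex.ofReal_im,
      neg_zero, add_zero]
  have hre : ∀ n : ℤ, (Complex.exp (-π * ((α:ℂ)⁻¹) * (n:ℂ) ^ 2
      + 2 * π * (-(Complex.I * β)) * (n:ℂ))).re
      = Real.exp (-π * (1/α) * (n:ℝ)^2) * Real.cos (2 * π * β * n) := by
    intro n
    have hz : (-π * ((α:ℂ)⁻¹) * (n:ℂ) ^ 2 + 2 * π * (-(Complex.I * β)) * (n:ℂ))
        = ((-π * (1/α) * (n:ℝ)^2 : ℝ) : ℂ) + ((-(2*π*β*n) : ℝ) : ℂ) * Complex.I := by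
      push_cast
      ring
    rw [hz, Complex.exp_re]
    simp only [Complex.add_re, Complex.ofReal_re, Complex.mul_I_re, Complex.ofReal_im,
      Complex.add_im, Complex.mul_I_im, neg_zero, add_zero, zero_add]
    rw [Real.cos_neg]
  -- main identity
  have hws : ((α:ℂ)⁻¹) ^ (1/2 : ℂ) ≠ 0 := by
    rw [hw]
    simp only [ne_eq, Complex.ofReal_eq_zero, inv_eq_zero]
    exact (Real.sqrt_pos.2 hα).ne'
  have key2 : ((th α β : ℝ) : ℂ) = (((Real.sqrt α)⁻¹ : ℝ) : ℂ)
      * ∑' n : ℤ, Complex.exp (-π * ((α:ℂ)⁻¹) * (n:ℂ) ^ 2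
          + 2 * π * (-(Complex.I * β)) * (n:ℂ)) := by
    rw [th, Complex.ofReal_tsum]
    have : (∑' n : ℤ, ((Real.exp (-π * α * ((n : ℝ) + β) ^ 2) : ℝ) : ℂ))
        = ∑' n : ℤ, Complex.exp (-π / ((α:ℂ)⁻¹) * ((n : ℂ) + Complex.I * (-(Complex.I * β))) ^ 2) :=
      tsum_congr fun n => (hc1 n).symm
    rw [this, ← hw, key, ← mul_assoc, mul_one_div, div_self hws, one_mul]
  have hre2 := congrArg Complex.re key2
  rw [Complex.ofReal_re, Complex.re_ofReal_mul] at hre2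
  rw [hre2, Complex.re_tsum hL]
  exact congrArg _ (tsum_congr hre)


lemma abs_sin_nat_mul_le (y : ℝ) : ∀ k : ℕ, |Real.sin ((k : ℝ) * y)| ≤ (k : ℝ) * |Real.sin y|
  | 0 => by simp
  | (k+1) => by
    have h : Real.sin (((k+1 : ℕ) : ℝ) * y)
        = Real.sin ((k:ℝ)*y) * Real.cos y + Real.cos ((k:ℝ)*y) * Real.sin y := by
      push_cast
      rw [add_mul, one_mul, Real.sin_add]
    rw [h]
    have h1 := abs_sin_nat_mul_le y k
    have h2 : |Real.sin ((k:ℝ)*y) * Real.cos y| ≤ |Real.sin ((k:ℝ)*y)| := by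
      rw [abs_mul]
      exact mul_le_of_le_one_right (abs_nonneg _) (Real.abs_cos_le_one _)
    have h3 : |Real.cos ((k:ℝ)*y) * Real.sin y| ≤ |Real.sin y| := by
      rw [abs_mul]
      exact mul_le_of_le_one_left (abs_nonneg _) (Real.abs_cos_le_one _)
    calc |Real.sin ((k:ℝ)*y) * Real.cos y + Real.cos ((k:ℝ)*y) * Real.sin y|
        ≤ |Real.sin ((k:ℝ)*y) * Real.cos y| + |Real.cos ((k:ℝ)*y) * Real.sin y| := abs_add_le _ _
      _ ≤ (k:ℝ) * |Real.sin y| + |Real.sin y| := by linarith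
      _ = ((k+1 : ℕ) : ℝ) * |Real.sin y| := by push_cast; ring

lemma cos_double_sin (x : ℝ) : Real.cos (2 * x) = 1 - 2 * Real.sin x ^ 2 := by
  rw [Real.cos_two_mul']
  linear_combination Real.sin_sq_add_cos_sq x

lemma sq_le_four_pow (m : ℕ) : ((m : ℝ))^2 ≤ 4 ^ m := by
  have h1 : m < 2 ^ m := Nat.lt_two_pow_self
  have h2 : m^2 ≤ (2^m)^2 := Nat.pow_le_pow_left h1.le 2
  have h3 : (2^m)^2 = 4^m := by
    rw [← pow_mul, pow_mul']
    norm_num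
  calc ((m:ℝ))^2 = ((m^2 : ℕ) : ℝ) := by push_cast; ring
    _ ≤ ((4^m : ℕ) : ℝ) := by exact_mod_cast h2.trans_eq h3
    _ = 4^m := by push_cast; ring


set_option maxHeartbeats 2000000 in
lemma fourier_strict {α β : ℝ} (hα : 0 < α) (hα2 : α ≤ 2) (hcos : Real.cos (π * β) ≠ 0) :
    th α (1/2) < th α β := by
  have hπ : 0 < π := Real.pi_pos
  have hia : 0 < 1/α := by positivity
  obtain ⟨q, hqdef⟩ : ∃ q : ℝ, q = Real.exp (-π * (1/α)) := ⟨_, rfl⟩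
  have hq0 : 0 < q := hqdef ▸ Real.exp_pos _
  have hq4 : q ≤ 1/4 := by
    have hinv : (1:ℝ)/2 ≤ 1/α := one_div_le_one_div_of_le hα hα2
    have h2 : q^2 = Real.exp (-π * (1/α) + -π * (1/α)) := by
      rw [hqdef, Real.exp_add]; ring
    have h3 : Real.exp (-π * (1/α) + -π * (1/α)) ≤ Real.exp (-3) := by
      rw [Real.exp_le_exp]
      nlinarith [Real.pi_gt_three]
    have h4 : Real.exp (-3) * Real.exp 3 = 1 := by rw [← Real.exp_add]; norm_num
    have h5 : (16:ℝ) ≤ Real.exp 3 := by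
      have h6 : Real.exp 3 = Real.exp 1 ^ (3:ℕ) := by
        rw [← Real.exp_nat_mul]; norm_num
      have h6b : (2.7:ℝ)^(3:ℕ) ≤ Real.exp 1 ^ (3:ℕ) :=
        pow_le_pow_left₀ (by norm_num) (by nlinarith [Real.exp_one_gt_d9]) 3
      rw [h6]
      calc (16:ℝ) ≤ (2.7:ℝ)^(3:ℕ) := by norm_num
        _ ≤ _ := h6b
    have h7 : Real.exp (-3) ≤ 1/16 := by
      nlinarith [Real.exp_pos (-3), Real.exp_pos 3]
    nlinarith [hq0]
  have hq1 : q ≤ 1 := by linarith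
  obtain ⟨r, hrdef⟩ : ∃ r : ℝ, r = 4 * q^3 := ⟨_, rfl⟩
  have hr0 : 0 ≤ r := by rw [hrdef]; positivity
  have hr16 : r ≤ 1/16 := by
    rw [hrdef]
    nlinarith [pow_le_pow_left₀ hq0.le hq4 3]
  have hr1 : r < 1 := by linarith
  obtain ⟨c2, hc2def⟩ : ∃ c : ℝ, c = Real.cos (π * β)^2 := ⟨_, rfl⟩
  have hc2 : 0 < c2 := hc2def ▸ lt_of_le_of_ne (sq_nonneg _) (Ne.symm (pow_ne_zero 2 hcos))
  obtain ⟨g, hgdef⟩ : ∃ g : ℕ → ℝ, g = fun m : ℕ => Real.exp (-π * (1/α) * (m:ℝ)^2)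
      * Real.cos (2*π*β*m) - Real.exp (-π * (1/α) * (m:ℝ)^2) * Real.cos (2*π*(1/2)*m) :=
    ⟨_, rfl⟩
  have SB : Summable (fun n : ℤ => Real.exp (-π * (1/α) * (n:ℝ)^2) * Real.cos (2*π*β*n)) :=
    summable_cos hia _
  have SH : Summable (fun n : ℤ =>
      Real.exp (-π * (1/α) * (n:ℝ)^2) * Real.cos (2*π*(1/2)*n)) :=
    summable_cos hia _
  obtain ⟨D, hDdef⟩ : ∃ D : ℤ → ℝ, D = fun n : ℤ => Real.exp (-π * (1/α) * (n:ℝ)^2)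
      * Real.cos (2*π*β*n) - Real.exp (-π * (1/α) * (n:ℝ)^2) * Real.cos (2*π*(1/2)*n) :=
    ⟨_, rfl⟩
  have SD : Summable D := by rw [hDdef]; exact SB.sub SH
  have hDg : ∀ m : ℕ, D (m : ℤ) = g m := by
    intro m
    simp only [hDdef, hgdef, Int.cast_natCast]
  have hDeven : ∀ n : ℤ, D (-n) = D n := by
    intro n
    simp only [hDdef, Int.cast_neg, mul_neg, Real.cos_neg, neg_sq]
  have Sg : Summable g :=
    (SD.comp_injective (Nat.cast_injective : Function.Injective
      (Nat.cast : ℕ → ℤ))).congr fun m => hDg m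
  have Sg1 : Summable (fun m : ℕ => g (m+1)) := (summable_nat_add_iff 1).2 Sg
  have Sodd : Summable (fun k : ℕ => g (2*k+1)) :=
    (Sg.comp_injective (fun a b h => by dsimp only at h; omega : Function.Injective fun k : ℕ => 2*k+1)).congr
      fun k => rfl
  have Seven : Summable (fun k : ℕ => g (2*k+1+1)) :=
    (Sg.comp_injective (fun a b h => by dsimp only at h; omega : Function.Injective fun k : ℕ => 2*k+1+1)).congr
      fun k => rfl
  have SDnat : Summable (fun n : ℕ => D (n : ℤ)) := Sg.congr fun m => (hDg m).symm
  have hnegeq : ∀ n : ℕ, D (-((n:ℤ)+1)) = g (n+1) := by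
    intro n
    rw [show -((n:ℤ)+1) = -(((n+1:ℕ)):ℤ) by push_cast; ring, hDeven, hDg]
  have SDneg : Summable (fun n : ℕ => D (-((n:ℤ)+1))) := Sg1.congr fun n => (hnegeq n).symm
  have hsplit := tsum_of_nat_of_neg_add_one (f := D) SDnat SDneg
  have e1 : ∑' n : ℕ, D (n : ℤ) = ∑' m : ℕ, g m := tsum_congr hDg
  have e2 : ∑' n : ℕ, D (-((n:ℤ)+1)) = ∑' n : ℕ, g (n+1) := tsum_congr hnegeq
  have e3 : ∑' m : ℕ, g m = g 0 + ∑' m : ℕ, g (m+1) := Summable.tsum_eq_zero_add Sg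
  have hg0 : g 0 = 0 := by simp [hgdef]
  have hbridge : ∑' n : ℤ, D n = 2 * ∑' m : ℕ, g (m+1) := by
    rw [hsplit, e1, e2, e3, hg0]
    ring
  -- pointwise estimates
  have hodd0 : ∀ k : ℕ, 0 ≤ g (2*k+1) := by
    intro k
    have hcosv : Real.cos (2*π*(1/2)*((2*k+1 : ℕ):ℝ)) = -1 := by
      rw [show 2*π*(1/2)*((2*k+1 : ℕ):ℝ) = ((k:ℤ):ℝ)*(2*π) + π by push_cast; ring]
      exact Real.cos_int_mul_two_pi_add_pi k
    simp only [hgdef]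
    rw [hcosv]
    nlinarith [Real.neg_one_le_cos (2*π*β*((2*k+1 : ℕ):ℝ)),
      Real.exp_pos (-π * (1/α) * (((2*k+1 : ℕ):ℝ))^2)]
  have hg1 : g 1 = 2 * q * c2 := by
    simp only [hgdef, Nat.cast_one]
    rw [show 2*π*(1/2)*(1:ℝ) = π by ring, Real.cos_pi]
    rw [show 2*π*β*(1:ℝ) = 2*(π*β) by ring, Real.cos_two_mul]
    rw [show -π * (1/α) * (1:ℝ)^2 = -π * (1/α) by ring]
    rw [hc2def, hqdef]
    ring
  have hev : ∀ k : ℕ, (-(8*c2*q)) * r^(k+1) ≤ g (2*k+1+1) := by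
    intro k
    have hcos1 : Real.cos (2*π*(1/2)*((2*k+1+1 : ℕ):ℝ)) = 1 := by
      rw [show 2*π*(1/2)*((2*k+1+1 : ℕ):ℝ) = ((k+1:ℤ):ℝ)*(2*π) by push_cast; ring]
      exact Real.cos_int_mul_two_pi _
    have hcos2 : Real.cos (2*π*β*((2*k+1+1 : ℕ):ℝ))
        = 1 - 2*Real.sin (((k+1:ℕ):ℝ)*(2*π*β))^2 := by
      rw [show 2*π*β*((2*k+1+1 : ℕ):ℝ) = 2*(((k+1:ℕ):ℝ)*(2*π*β)) by push_cast; ring]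
      exact cos_double_sin _
    have hsin : Real.sin (((k+1:ℕ):ℝ)*(2*π*β))^2 ≤ ((k+1:ℕ):ℝ)^2 * (4*c2) := by
      have h1 := abs_sin_nat_mul_le (2*π*β) (k+1)
      have h2 : Real.sin (((k+1:ℕ):ℝ)*(2*π*β))^2 ≤ (((k+1:ℕ):ℝ) * |Real.sin (2*π*β)|)^2 := by
        rw [← sq_abs]
        exact pow_le_pow_left₀ (abs_nonneg _) h1 2
      have h3 : Real.sin (2*π*β) = 2*Real.sin (π*β)*Real.cos (π*β) := by
        rw [show 2*π*β = 2*(π*β) by ring]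
        exact Real.sin_two_mul _
      have h4 : |Real.sin (2*π*β)|^2 ≤ 4*c2 := by
        rw [sq_abs, h3, hc2def]
        nlinarith [Real.sin_sq_le_one (π*β), sq_nonneg (Real.cos (π*β))]
      calc Real.sin (((k+1:ℕ):ℝ)*(2*π*β))^2
          ≤ (((k+1:ℕ):ℝ))^2 * |Real.sin (2*π*β)|^2 := by rw [mul_pow] at h2; exact h2
        _ ≤ ((k+1:ℕ):ℝ)^2 * (4*c2) := mul_le_mul_of_nonneg_left h4 (by positivity)
    have hEq : Real.exp (-π*(1/α)*((2*k+1+1 : ℕ):ℝ)^2) = q^((2*k+1+1)^2 : ℕ) := by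
      rw [hqdef, ← Real.exp_nat_mul]
      congr 1
      push_cast
      ring
    have hp1 : q^((2*k+1+1)^2 : ℕ) ≤ q^(3*(k+1)+1) :=
      pow_le_pow_of_le_one hq0.le hq1 (by nlinarith [sq_nonneg k])
    have hp2 : ((k+1:ℕ):ℝ)^2 ≤ 4^(k+1) := sq_le_four_pow (k+1)
    have hqpow : (0:ℝ) ≤ q^((2*k+1+1)^2 : ℕ) := pow_nonneg hq0.le _
    have key1 : ((k+1:ℕ):ℝ)^2 * q^((2*k+1+1)^2 : ℕ) ≤ q * r^(k+1) := by
      have hk : ((k+1:ℕ):ℝ)^2 * q^((2*k+1+1)^2 : ℕ) ≤ (4:ℝ)^(k+1) * q^(3*(k+1)+1) :=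
        mul_le_mul hp2 hp1 hqpow (by positivity)
      refine hk.trans (le_of_eq ?_)
      rw [hrdef, mul_pow, show (3*(k+1)+1 : ℕ) = 1 + 3*(k+1) by ring, pow_add, pow_one,
        ← pow_mul]
      ring
    simp only [hgdef]
    rw [hcos1, hcos2, hEq]
    have b1 : q^((2*k+1+1)^2 : ℕ) * Real.sin (((k+1:ℕ):ℝ)*(2*π*β))^2
        ≤ q^((2*k+1+1)^2 : ℕ) * (((k+1:ℕ):ℝ)^2 * (4*c2)) :=
      mul_le_mul_of_nonneg_left hsin hqpow
    have b2 : (4*c2) * (((k+1:ℕ):ℝ)^2 * q^((2*k+1+1)^2 : ℕ)) ≤ (4*c2) * (q * r^(k+1)) :=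
      mul_le_mul_of_nonneg_left key1 (by linarith [hc2])
    linarith [b1, b2]
  -- sum the bounds
  have Sgeom : Summable (fun k : ℕ => r^k) := summable_geometric_of_lt_one hr0 hr1
  have Sgeom1 : Summable (fun k : ℕ => (-(8*c2*q)) * r^(k+1)) := by
    simp_rw [pow_succ]
    exact (Sgeom.mul_right r).mul_left _
  have hev_sum : ∑' k : ℕ, ((-(8*c2*q)) * r^(k+1)) ≤ ∑' k : ℕ, g (2*k+1+1) :=
    Summable.tsum_le_tsum hev Sgeom1 Seven
  have geomval : ∑' k : ℕ, ((-(8*c2*q)) * r^(k+1)) = (-(8*c2*q)) * ((1-r)⁻¹ * r) := by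
    rw [tsum_mul_left]
    congr 1
    simp_rw [pow_succ]
    rw [tsum_mul_right, tsum_geometric_of_lt_one hr0 hr1]
  have hodd_sum : 2*q*c2 ≤ ∑' k : ℕ, g (2*k+1) := by
    have hle := Summable.le_tsum Sodd 0 (fun j _ => hodd0 j)
    rw [show (2*0+1 : ℕ) = 1 by norm_num, hg1] at hle
    exact hle
  have heo := tsum_even_add_odd (f := fun m => g (m+1)) Sodd Seven
  have hinv16 : (1-r)⁻¹ ≤ 16/15 := by
    rw [show (16:ℝ)/15 = ((15:ℝ)/16)⁻¹ by norm_num]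
    exact inv_anti₀ (by norm_num) (by linarith)
  have hprod : (1-r)⁻¹ * r ≤ 1/15 :=
    calc (1-r)⁻¹ * r ≤ (16/15) * (1/16) := mul_le_mul hinv16 hr16 hr0 (by norm_num)
      _ = 1/15 := by norm_num
  have hpos : 0 < ∑' m : ℕ, g (m+1) := by
    have ha0 : -(8*c2*q) ≤ 0 := by nlinarith [mul_pos hc2 hq0]
    have hlow : (-(8*c2*q)) * (1/15) ≤ (-(8*c2*q)) * ((1-r)⁻¹ * r) :=
      mul_le_mul_of_nonpos_left hprod ha0
    have htot : 2*q*c2 + (-(8*c2*q)) * ((1-r)⁻¹*r) ≤ ∑' m : ℕ, g (m+1) := by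
      rw [← heo]
      exact add_le_add hodd_sum (geomval ▸ hev_sum)
    nlinarith [mul_pos hq0 hc2]
  have hDpos : 0 < ∑' n : ℤ, D n := by
    rw [hbridge]
    linarith
  rw [poisson hα β, poisson hα (1/2)]
  refine mul_lt_mul_of_pos_left ?_ (inv_pos.2 (Real.sqrt_pos.2 hα))
  have hsubeq : ∑' n : ℤ, D n
      = (∑' n : ℤ, Real.exp (-π * (1/α) * (n:ℝ)^2) * Real.cos (2*π*β*n))
        - ∑' n : ℤ, Real.exp (-π * (1/α) * (n:ℝ)^2) * Real.cos (2*π*(1/2)*n) := by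
    rw [hDdef]
    exact Summable.tsum_sub SB SH
  linarith [hDpos, hsubeq]

lemma main_lt {α β : ℝ} (hα : 0 < α) (hnk : ¬ ∃ k : ℤ, β - 1/2 = (k:ℝ)) :
    th α (1/2) < th α β := by
  rcases le_total α 2 with hle | hge
  · refine fourier_strict hα hle ?_
    intro hc
    rcases Real.cos_eq_zero_iff.1 hc with ⟨k, hk⟩
    refine hnk ⟨k, ?_⟩
    have hβ : β = (k:ℝ) + 1/2 :=
      mul_left_cancel₀ Real.pi_ne_zero (by rw [hk]; ring)
    linarith
  · have h1 : th α β = th α (Int.fract β) := by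
      conv_lhs => rw [show β = Int.fract β + (⌊β⌋ : ℝ) by rw [Int.fract]; ring]
      rw [th_add_int]
    have hf0 : 0 ≤ Int.fract β := Int.fract_nonneg β
    have hf1 : Int.fract β < 1 := Int.fract_lt_one β
    have hne : Int.fract β ≠ 1/2 := by
      intro h
      refine hnk ⟨⌊β⌋, ?_⟩
      rw [Int.fract] at h
      linarith
    rcases lt_or_gt_of_ne hne with hlt2 | hgt2
    · have hc := conf_strict hα hge (t := 1/2 - Int.fract β) (by linarith) (by linarith)
      rw [h1, show Int.fract β = 1/2 - (1/2 - Int.fract β) by ring]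
      exact hc
    · have h2 : th α (1 - Int.fract β) = th α (Int.fract β) := by
        rw [show (1:ℝ) - Int.fract β = -(Int.fract β) + ((1:ℤ):ℝ) by push_cast; ring,
          th_add_int, th_neg]
      have hc := conf_strict hα hge (t := Int.fract β - 1/2) (by linarith) (by linarith)
      rw [h1, ← h2, show (1:ℝ) - Int.fract β = 1/2 - (Int.fract β - 1/2) by ring]
      exact hc

end ThetaMin

/-- For every `α > 0`, the translated theta function `β ↦ θ_{ℤ+β}(α)` attains its
minimum exactly at the points congruent to `1/2` modulo `1`:
`θ_{ℤ+1/2}(α) ≤ θ_{ℤ+β}(α)`, with equality iff `β − 1/2 ∈ ℤ`. -/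
theorem theta_Z_min_at_half (α β : ℝ) (hα : 0 < α) :
    (∑' n : ℤ, Real.exp (-π * α * ((n : ℝ) + 1 / 2) ^ 2)) ≤
      (∑' n : ℤ, Real.exp (-π * α * ((n : ℝ) + β) ^ 2)) ∧
    ((∑' n : ℤ, Real.exp (-π * α * ((n : ℝ) + 1 / 2) ^ 2)) =
        (∑' n : ℤ, Real.exp (-π * α * ((n : ℝ) + β) ^ 2)) ↔
      ∃ k : ℤ, β - 1 / 2 = (k : ℝ)) := by
  show ThetaMin.th α (1/2) ≤ ThetaMin.th α β ∧
    (ThetaMin.th α (1/2) = ThetaMin.th α β ↔ ∃ k : ℤ, β - 1/2 = (k:ℝ))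
  by_cases hk : ∃ k : ℤ, β - 1/2 = (k:ℝ)
  · obtain ⟨k, hkk⟩ := hk
    have he : ThetaMin.th α β = ThetaMin.th α (1/2) := by
      rw [show β = 1/2 + (k:ℝ) by linarith, ThetaMin.th_add_int]
    exact ⟨he.ge, ⟨fun _ => ⟨k, hkk⟩, fun _ => he.symm⟩⟩
  · have hlt := ThetaMin.main_lt hα hk
    exact ⟨hlt.le, ⟨fun h => absurd h hlt.ne, fun hk' => absurd hk' hk⟩⟩
end

section
/- Let d ≥ 1 and a₁, …, a_d > 0, and let X = ⊕_{i=1}^d ℤ(aᵢeᵢ) be the orthorhombic lattice, so that θ_{X+z}(α) = ∑_{m∈ℤ^d} exp(−πα ∑_{i=1}^d (aᵢmᵢ + zᵢ)²). Let z* = (a₁/2, …, a_d/2) be the center of the primitive cell. Then for every α > 0 and every z ∈ ℝ^d, θ_{X+z*}(α) ≤ θ_{X+z}(α), and equality holds if and only if zᵢ − aᵢ/2 ∈ aᵢℤ for every i ∈ {1, …, d}. -/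
open scoped Real

open Real

set_option maxHeartbeats 1000000

noncomputable def GG (c t : ℝ) : ℝ := ∑' n : ℤ, rexp (-c * ((n : ℝ) + t) ^ 2)

lemma summableGG {c : ℝ} (hc : 0 < c) (t : ℝ) :
    Summable fun n : ℤ => rexp (-c * ((n : ℝ) + t) ^ 2) := by
  have h := HurwitzKernelBounds.summable_f_int 0 t (t := c / π) (by positivity)
  refine h.congr fun n => ?_
  simp only [HurwitzKernelBounds.f_int, pow_zero, one_mul]
  congr 1
  field_simp

lemma GG_pos {c : ℝ} (hc : 0 < c) (t : ℝ) : 0 < GG c t :=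
  Summable.tsum_pos (summableGG hc t) (fun n => (exp_pos _).le) 0 (exp_pos _)

lemma GG_nonneg {c : ℝ} (hc : 0 < c) (t : ℝ) : 0 ≤ GG c t := (GG_pos hc t).le

lemma GG_int_add {c : ℝ} (t : ℝ) (k : ℤ) : GG c (t + k) = GG c t := by
  unfold GG
  rw [← (Equiv.addRight k).tsum_eq (fun n : ℤ => rexp (-c * ((n : ℝ) + t) ^ 2))]
  refine tsum_congr fun n => ?_
  simp only [Equiv.coe_addRight]
  push_cast
  ring_nf

lemma GG_neg {c : ℝ} (t : ℝ) : GG c (-t) = GG c t := by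
  unfold GG
  rw [← (Equiv.neg ℤ).tsum_eq (fun n : ℤ => rexp (-c * ((n : ℝ) + t) ^ 2))]
  refine tsum_congr fun n => ?_
  simp only [Equiv.neg_apply]
  push_cast
  ring_nf

lemma hasSum_int_even_odd {f : ℤ → ℝ} {a b : ℝ}
    (ha : HasSum (fun k : ℤ => f (2 * k)) a)
    (hb : HasSum (fun k : ℤ => f (2 * k + 1)) b) : HasSum f (a + b) := by
  have hinj1 : Function.Injective (fun k : ℤ => 2 * k) := fun x y h => by dsimp only at h; omega
  have hinj2 : Function.Injective (fun k : ℤ => 2 * k + 1) := fun x y h => by dsimp only at h; omega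
  have h1 : HasSum (f ∘ (↑) : Set.range (fun k : ℤ => 2 * k) → ℝ) a :=
    (Function.Injective.hasSum_range_iff hinj1).2 ha
  have h2 : HasSum (f ∘ (↑) : Set.range (fun k : ℤ => 2 * k + 1) → ℝ) b :=
    (Function.Injective.hasSum_range_iff hinj2).2 hb
  have hcompl : Set.range (fun k : ℤ => 2 * k + 1) = (Set.range (fun k : ℤ => 2 * k))ᶜ := by
    ext n
    simp only [Set.mem_range, Set.mem_compl_iff]
    constructor
    · rintro ⟨k, rfl⟩ ⟨j, hj⟩; omega
    · intro h
      rcases Int.even_or_odd n with ⟨k, hk⟩ | ⟨k, hk⟩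
      · exact absurd ⟨k, by omega⟩ h
      · exact ⟨k, by omega⟩
  rw [hcompl] at h2
  exact h1.add_compl h2

lemma hasSum_int_pair_split {F : ℤ × ℤ → ℝ} {a b : ℝ}
    (ha : HasSum (fun q : ℤ × ℤ => F (q.1 + q.2, q.1 - q.2)) a)
    (hb : HasSum (fun q : ℤ × ℤ => F (q.1 + q.2 + 1, q.1 - q.2)) b) : HasSum F (a + b) := by
  have hinj1 : Function.Injective (fun q : ℤ × ℤ => ((q.1 + q.2, q.1 - q.2) : ℤ × ℤ)) := by
    rintro ⟨x1, x2⟩ ⟨y1, y2⟩ h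
    simp only [Prod.mk.injEq] at h
    have : x1 = y1 ∧ x2 = y2 := by omega
    simp [Prod.ext_iff, this.1, this.2]
  have hinj2 : Function.Injective (fun q : ℤ × ℤ => ((q.1 + q.2 + 1, q.1 - q.2) : ℤ × ℤ)) := by
    rintro ⟨x1, x2⟩ ⟨y1, y2⟩ h
    simp only [Prod.mk.injEq] at h
    have : x1 = y1 ∧ x2 = y2 := by omega
    simp [Prod.ext_iff, this.1, this.2]
  have h1 : HasSum (F ∘ (↑) : Set.range (fun q : ℤ × ℤ => ((q.1 + q.2, q.1 - q.2) : ℤ × ℤ)) → ℝ) a :=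
    (Function.Injective.hasSum_range_iff hinj1).2 ha
  have h2 : HasSum (F ∘ (↑) : Set.range (fun q : ℤ × ℤ => ((q.1 + q.2 + 1, q.1 - q.2) : ℤ × ℤ)) → ℝ) b :=
    (Function.Injective.hasSum_range_iff hinj2).2 hb
  have hcompl : Set.range (fun q : ℤ × ℤ => ((q.1 + q.2 + 1, q.1 - q.2) : ℤ × ℤ))
      = (Set.range (fun q : ℤ × ℤ => ((q.1 + q.2, q.1 - q.2) : ℤ × ℤ)))ᶜ := by
    ext ⟨m, n⟩
    simp only [Set.mem_range, Set.mem_compl_iff, Prod.mk.injEq, Prod.exists]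
    constructor
    · rintro ⟨j, k, hj, hk⟩ ⟨j', k', hj', hk'⟩; omega
    · intro h
      rcases Int.even_or_odd (m + n) with ⟨s, hs⟩ | ⟨s, hs⟩
      · exact absurd ⟨s, m - s, by omega, by omega⟩ h
      · exact ⟨s, m - 1 - s, by omega, by omega⟩
  rw [hcompl] at h2
  exact h1.add_compl h2

lemma GG_double {c : ℝ} (hc : 0 < c) (w : ℝ) :
    GG (4 * c) w + GG (4 * c) (w + 1 / 2) = GG c (2 * w) := by
  have h4 : (0:ℝ) < 4 * c := by linarith
  have he : HasSum (fun k : ℤ => rexp (-c * (((2 * k : ℤ) : ℝ) + 2 * w) ^ 2)) (GG (4 * c) w) := by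
    refine HasSum.congr_fun ((summableGG h4 w).hasSum) fun k => ?_
    congr 1
    push_cast
    ring
  have ho : HasSum (fun k : ℤ => rexp (-c * (((2 * k + 1 : ℤ) : ℝ) + 2 * w) ^ 2))
      (GG (4 * c) (w + 1 / 2)) := by
    refine HasSum.congr_fun ((summableGG h4 (w + 1 / 2)).hasSum) fun k => ?_
    congr 1
    push_cast
    ring
  have := hasSum_int_even_odd (f := fun n : ℤ => rexp (-c * ((n : ℝ) + 2 * w) ^ 2)) he ho
  exact this.tsum_eq.symm

lemma GG_mul {c : ℝ} (hc : 0 < c) (x y : ℝ) :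
    GG c x * GG c y =
      GG (2 * c) ((x + y) / 2) * GG (2 * c) ((x - y) / 2) +
      GG (2 * c) ((x + y) / 2 + 1 / 2) * GG (2 * c) ((x - y) / 2 + 1 / 2) := by
  have h2 : (0:ℝ) < 2 * c := by linarith
  have pair_hasSum : ∀ c' : ℝ, 0 < c' → ∀ u v : ℝ, HasSum (fun q : ℤ × ℤ =>
      rexp (-c' * ((q.1 : ℝ) + u) ^ 2) * rexp (-c' * ((q.2 : ℝ) + v) ^ 2))
      (GG c' u * GG c' v) := by
    intro c' hc' u v
    have hs : Summable (fun q : ℤ × ℤ => rexp (-c' * ((q.1 : ℝ) + u) ^ 2) *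
        rexp (-c' * ((q.2 : ℝ) + v) ^ 2)) :=
      (summableGG hc' u).mul_of_nonneg (summableGG hc' v)
        (fun n => (exp_pos _).le) (fun n => (exp_pos _).le)
    exact hs.hasSum_iff.mpr (Summable.tsum_mul_tsum (summableGG hc' u) (summableGG hc' v) hs).symm
  have hF := pair_hasSum c hc x y
  have ha : HasSum (fun q : ℤ × ℤ =>
      rexp (-c * (((q.1 + q.2 : ℤ) : ℝ) + x) ^ 2) * rexp (-c * (((q.1 - q.2 : ℤ) : ℝ) + y) ^ 2))
      (GG (2 * c) ((x + y) / 2) * GG (2 * c) ((x - y) / 2)) := by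
    refine HasSum.congr_fun (pair_hasSum (2*c) h2 ((x + y) / 2) ((x - y) / 2)) fun q => ?_
    rw [← Real.exp_add, ← Real.exp_add]
    congr 1
    push_cast
    ring
  have hb : HasSum (fun q : ℤ × ℤ =>
      rexp (-c * (((q.1 + q.2 + 1 : ℤ) : ℝ) + x) ^ 2) *
        rexp (-c * (((q.1 - q.2 : ℤ) : ℝ) + y) ^ 2))
      (GG (2 * c) ((x + y) / 2 + 1 / 2) * GG (2 * c) ((x - y) / 2 + 1 / 2)) := by
    refine HasSum.congr_fun (pair_hasSum (2*c) h2 ((x + y) / 2 + 1 / 2) ((x - y) / 2 + 1 / 2)) fun q => ?_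
    rw [← Real.exp_add, ← Real.exp_add]
    congr 1
    push_cast
    ring
  have hsplit := hasSum_int_pair_split (F := fun p : ℤ × ℤ =>
    rexp (-c * ((p.1 : ℝ) + x) ^ 2) * rexp (-c * ((p.2 : ℝ) + y) ^ 2)) ha hb
  exact hF.unique hsplit

lemma GG_one_add {c : ℝ} (t : ℝ) : GG c (t + 1) = GG c t := by
  simpa using GG_int_add t 1

lemma GG_sq {c : ℝ} (hc : 0 < c) (x : ℝ) :
    GG c x ^ 2 = GG (2 * c) x * GG (2 * c) 0 + GG (2 * c) (x + 1 / 2) * GG (2 * c) (1 / 2) := by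
  have h := GG_mul hc x x
  rw [show (x + x) / 2 = x by ring, show (x - x) / 2 = 0 by ring,
    show x + 1 / 2 = x + 1 / 2 by ring, show (0:ℝ) + 1 / 2 = 1 / 2 by ring] at h
  rw [sq]
  exact h

lemma GG_half_sq {c : ℝ} (hc : 0 < c) :
    GG c (1 / 2) ^ 2 = 2 * (GG (2 * c) 0 * GG (2 * c) (1 / 2)) := by
  have h := GG_sq hc (1 / 2)
  rw [show (1:ℝ) / 2 + 1 / 2 = 0 + 1 by ring, GG_one_add (c := 2 * c) 0] at h
  rw [h]; ring

lemma GG_prod_half {c : ℝ} (hc : 0 < c) (x : ℝ) :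
    GG (2 * c) x * GG (2 * c) (x + 1 / 2) = GG (4 * c) (1 / 4) * GG c (2 * x + 1 / 2) := by
  have h2 : (0:ℝ) < 2 * c := by linarith
  have h := GG_mul h2 x (x + 1 / 2)
  rw [show (x + (x + 1 / 2)) / 2 = x + 1 / 4 by ring,
    show (x - (x + 1 / 2)) / 2 = -(1 / 4) by ring,
    show x + 1 / 4 + 1 / 2 = x + 3 / 4 by ring] at h
  rw [show (-(1 / 4) : ℝ) + 1 / 2 = 1 / 4 by norm_num, GG_neg (c := 2 * (2 * c)) (1 / 4),
    show 2 * (2 * c) = 4 * c by ring] at h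
  have hd := GG_double hc (x + 1 / 4)
  rw [show x + 1 / 4 + 1 / 2 = x + 3 / 4 by ring,
    show 2 * (x + 1 / 4) = 2 * x + 1 / 2 by ring] at hd
  rw [h, ← hd]; ring

lemma GG_half_eq {c : ℝ} (hc : 0 < c) : GG c (1 / 2) = 2 * GG (4 * c) (1 / 4) := by
  have h2 : (0:ℝ) < 2 * c := by linarith
  have h := GG_half_sq hc
  have h4 : GG (2 * c) 0 * GG (2 * c) (0 + 1 / 2) = GG (4 * c) (1 / 4) * GG c (2 * 0 + 1 / 2) :=
    GG_prod_half hc 0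
  rw [show (0:ℝ) + 1 / 2 = 1 / 2 by ring, show 2 * (0:ℝ) + 1 / 2 = 1 / 2 by ring] at h4
  rw [h4] at h
  have hpos := GG_pos hc (1 / 2)
  have := mul_right_cancel₀ (ne_of_gt hpos)
    (show GG c (1 / 2) * GG c (1 / 2) = (2 * GG (4 * c) (1 / 4)) * GG c (1 / 2) by
      rw [← sq, h]; ring)
  exact this

/-- The key inequality : `G(1/2)³ G(2x+1/2) ≤ G(x)⁴`. -/
lemma GG_key {c : ℝ} (hc : 0 < c) (x : ℝ) :
    GG c (1 / 2) ^ 3 * GG c (2 * x + 1 / 2) ≤ GG c x ^ 4 := by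
  have h2 : (0:ℝ) < 2 * c := by linarith
  set p := GG (2 * c) x with hp
  set q := GG (2 * c) 0 with hq
  set r := GG (2 * c) (x + 1 / 2) with hr
  set s := GG (2 * c) (1 / 2) with hs
  have h1 : GG c x ^ 2 = p * q + r * s := GG_sq hc x
  have h3 : p * r = GG (4 * c) (1 / 4) * GG c (2 * x + 1 / 2) := GG_prod_half hc x
  have h4 : q * s = GG (4 * c) (1 / 4) * GG c (2 * 0 + 1 / 2) := by
    have := GG_prod_half hc 0
    rw [show (0:ℝ) + 1 / 2 = 1 / 2 by ring] at this
    exact this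
  rw [show 2 * (0:ℝ) + 1 / 2 = 1 / 2 by ring] at h4
  have e1 : GG c x ^ 4 = (p * q + r * s) ^ 2 := by rw [← h1]; ring
  have e2 : GG c (1 / 2) ^ 3 * GG c (2 * x + 1 / 2) = 4 * (p * r) * (q * s) := by
    rw [h3, h4, GG_half_eq hc]; ring
  rw [e1, e2]
  nlinarith [sq_nonneg (p * q - r * s)]

lemma GG_fract {c : ℝ} (t : ℝ) : GG c t = GG c (Int.fract t) := by
  conv_lhs => rw [show t = Int.fract t + (⌊t⌋ : ℤ) by rw [Int.fract]; ring]
  exact GG_int_add _ _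

lemma GG_upper {c : ℝ} (hc : 0 < c) (t : ℝ) :
    GG c t ≤ rexp (c / 4) * GG (c / 2) (1 / 2) := by
  rw [GG_fract]
  set w := Int.fract t with hw
  have hw0 : 0 ≤ w := Int.fract_nonneg t
  have hw1 : w < 1 := Int.fract_lt_one t
  have hc2 : (0:ℝ) < c / 2 := by linarith
  unfold GG
  rw [← tsum_mul_left]
  refine Summable.tsum_le_tsum (fun n => ?_) (summableGG hc w) ((summableGG hc2 (1/2)).mul_left _)
  rw [← Real.exp_add, Real.exp_le_exp]
  have key : ((n:ℝ) + 1 / 2) ^ 2 ≤ 2 * ((n:ℝ) + w) ^ 2 + 2 * (w - 1 / 2) ^ 2 := by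
    nlinarith [sq_nonneg ((n:ℝ) + w + (w - 1 / 2))]
  have hδ : (w - 1 / 2) ^ 2 ≤ 1 / 4 := by nlinarith
  nlinarith [mul_le_mul_of_nonneg_left key (by linarith : (0:ℝ) ≤ c / 2),
    mul_le_mul_of_nonneg_left hδ (by linarith : (0:ℝ) ≤ c / 2)]

lemma GG_lower {c : ℝ} (hc : 0 < c) (t : ℝ) : rexp (-c) ≤ GG c t := by
  rw [GG_fract]
  set w := Int.fract t with hw
  have hw0 : 0 ≤ w := Int.fract_nonneg t
  have hw1 : w < 1 := Int.fract_lt_one t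
  have h0 : rexp (-c) ≤ rexp (-c * ((0:ℤ) + w) ^ 2) := by
    rw [Real.exp_le_exp]
    push_cast
    nlinarith [mul_le_mul_of_nonneg_left (show w ^ 2 ≤ 1 by nlinarith) hc.le]
  refine h0.trans ?_
  exact Summable.le_tsum (summableGG hc w) 0 (fun b _ => (exp_pos _).le)

/-- The theta function is minimized at the center. -/
lemma GG_min {c : ℝ} (hc : 0 < c) (t : ℝ) : GG c (1 / 2) ≤ GG c t := by
  set φ : ℝ → ℝ := fun u => log (GG c (1 / 2 + u)) - log (GG c (1 / 2)) with hφ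
  have hpos : ∀ v : ℝ, 0 < GG c v := GG_pos hc
  have step : ∀ u : ℝ, φ (2 * u) ≤ 4 * φ u := by
    intro u
    have hk := GG_key hc (1 / 2 + u)
    rw [show 2 * (1 / 2 + u) + 1 / 2 = 1 / 2 + 2 * u + 1 by ring,
      GG_one_add (c := c) (1 / 2 + 2 * u)] at hk
    have hl := Real.log_le_log (mul_pos (pow_pos (hpos _) 3) (hpos _)) hk
    rw [Real.log_mul (ne_of_gt (pow_pos (hpos _) 3)) (ne_of_gt (hpos _)),
      Real.log_pow, Real.log_pow] at hl
    simp only [hφ]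
    push_cast at hl
    linarith
  have hB : ∃ B : ℝ, 0 ≤ B ∧ ∀ u : ℝ, -B ≤ φ u := by
    refine ⟨log (rexp (c / 4) * GG (c / 2) (1 / 2)) - log (rexp (-c)), ?_, fun u => ?_⟩
    · have h1 := GG_lower hc (1/2)
      have h2 := GG_upper hc (1/2)
      have := Real.log_le_log (exp_pos _) (h1.trans h2)
      linarith
    · have h1 : log (rexp (-c)) ≤ log (GG c (1 / 2 + u)) :=
        Real.log_le_log (exp_pos _) (GG_lower hc _)
      have h2 : log (GG c (1 / 2)) ≤ log (rexp (c / 4) * GG (c / 2) (1 / 2)) :=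
        Real.log_le_log (hpos _) (GG_upper hc _)
      simp only [hφ]
      linarith
  obtain ⟨B, hB0, hBb⟩ := hB
  have iter : ∀ (k : ℕ) (u : ℝ), φ ((2:ℝ) ^ k * u) ≤ 4 ^ k * φ u := by
    intro k
    induction k with
    | zero => intro u; simp
    | succ k ih =>
      intro u
      have h1 : φ ((2:ℝ) ^ (k + 1) * u) = φ ((2:ℝ) ^ k * (2 * u)) := by ring_nf
      rw [h1]
      calc φ ((2:ℝ) ^ k * (2 * u)) ≤ 4 ^ k * φ (2 * u) := ih (2 * u)
        _ ≤ 4 ^ k * (4 * φ u) := by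
            exact mul_le_mul_of_nonneg_left (step u) (by positivity)
        _ = 4 ^ (k + 1) * φ u := by ring
  have hφ0 : ∀ u : ℝ, 0 ≤ φ u := by
    intro u
    by_contra hneg
    push_neg at hneg
    obtain ⟨k, hk⟩ := pow_unbounded_of_one_lt (B / (-φ u)) (by norm_num : (1:ℝ) < 4)
    have h1 : B < 4 ^ k * (-φ u) := by
      rw [div_lt_iff₀ (by linarith)] at hk
      linarith [hk]
    have h2 : -B ≤ φ ((2:ℝ) ^ k * u) := hBb _
    have h3 : φ ((2:ℝ) ^ k * u) ≤ 4 ^ k * φ u := iter k u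
    linarith
  have := hφ0 (t - 1 / 2)
  rw [hφ] at this
  simp only [show 1 / 2 + (t - 1 / 2) = t by ring] at this
  have := Real.log_le_log_iff (hpos (1/2)) (hpos t) |>.mp (by linarith)
  exact this

lemma GG_eq_step {c : ℝ} (hc : 0 < c) {x : ℝ} (h : GG c x = GG c (1 / 2)) :
    GG (2 * c) x = GG (2 * c) (1 / 2) := by
  have h2 : (0:ℝ) < 2 * c := by linarith
  have h4 : (0:ℝ) < 4 * c := by linarith
  set p := GG (2 * c) x with hp
  set q := GG (2 * c) 0 with hq
  set r := GG (2 * c) (x + 1 / 2) with hr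
  set s := GG (2 * c) (1 / 2) with hs
  set g4 := GG (4 * c) (1 / 4) with hg4
  have hppos : 0 < p := GG_pos h2 x
  have hqpos : 0 < q := GG_pos h2 0
  have hrpos : 0 < r := GG_pos h2 _
  have hspos : 0 < s := GG_pos h2 _
  have hg4pos : 0 < g4 := GG_pos h4 _
  have h1 : GG c x ^ 2 = p * q + r * s := GG_sq hc x
  have hhs : GG c (1 / 2) ^ 2 = 2 * (q * s) := GG_half_sq hc
  have h3 : p * r = g4 * GG c (2 * x + 1 / 2) := GG_prod_half hc x
  have h4' : q * s = g4 * GG c (1 / 2) := by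
    have := GG_prod_half hc 0
    rw [show (0:ℝ) + 1 / 2 = 1 / 2 by ring, show 2 * (0:ℝ) + 1 / 2 = 1 / 2 by ring] at this
    exact this
  have hA : p * q + r * s = 2 * (q * s) := by rw [← h1, ← hhs, h]
  have hB : q * s ≤ p * r := by
    rw [h3, h4']
    exact mul_le_mul_of_nonneg_left (GG_min hc _) hg4pos.le
  have hsq : (p * q - r * s) ^ 2 ≤ 0 := by
    nlinarith [mul_le_mul_of_nonneg_left hB (mul_pos hqpos hspos).le]
  have hpqrs : p * q = r * s := by
    have := le_antisymm hsq (sq_nonneg _)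
    have := pow_eq_zero_iff (n := 2) (by norm_num) |>.mp this
    linarith [sub_eq_zero.mp this]
  have hpq_qs : p * q = q * s := by linarith
  have : q * p = q * s := by linarith
  exact mul_left_cancel₀ (ne_of_gt hqpos) this

lemma GG_eq_iter {c : ℝ} (hc : 0 < c) {x : ℝ} (h : GG c x = GG c (1 / 2)) :
    ∀ k : ℕ, GG ((2:ℝ) ^ k * c) x = GG ((2:ℝ) ^ k * c) (1 / 2) := by
  intro k
  induction k with
  | zero => simpa using h
  | succ k ih =>
    have hck : (0:ℝ) < (2:ℝ) ^ k * c := by positivity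
    have := GG_eq_step hck ih
    rw [show (2:ℝ) ^ (k + 1) * c = 2 * ((2:ℝ) ^ k * c) by ring]
    exact this

lemma GG_eq_imp {c : ℝ} (hc : 0 < c) {x : ℝ} (h : GG c x = GG c (1 / 2)) :
    ∃ n : ℤ, x - 1 / 2 = n := by
  by_contra hno
  push_neg at hno
  set e : ℝ := x - round x with he
  have habs : |e| ≤ 1 / 2 := abs_sub_round x
  have hne : |e| ≠ 1 / 2 := by
    intro habs2
    rcases abs_eq (by norm_num : (0:ℝ) ≤ 1/2) |>.mp habs2 with h' | h'
    · exact hno (round x) (by rw [he] at h'; linarith)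
    · exact hno (round x - 1) (by push_cast; rw [he] at h'; linarith)
  have he2 : e ^ 2 < 1 / 4 := by
    have : |e| < 1 / 2 := lt_of_le_of_ne habs hne
    have h2 := mul_self_lt_mul_self (abs_nonneg e) this
    rw [← sq_abs e, sq]
    linarith
  set K := GG 1 (1 / 2) with hK
  have hKpos : 0 < K := GG_pos one_pos _
  -- choose a large doubling parameter
  set T : ℝ := max 1 ((1 / 4 + log K + 1) / (1 / 4 - e ^ 2)) with hT
  obtain ⟨k, hk⟩ := pow_unbounded_of_one_lt (T / c) (by norm_num : (1:ℝ) < 2)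
  set C : ℝ := (2:ℝ) ^ k * c with hC
  have hCpos : (0:ℝ) < C := by positivity
  have hTC : T < C := by
    rw [div_lt_iff₀ hc] at hk
    calc T < 2 ^ k * c := hk
    _ = C := rfl
  have hC1 : (1:ℝ) ≤ C := le_trans (le_max_left _ _) hTC.le
  have hCe : 1 / 4 + log K + 1 ≤ C * (1 / 4 - e ^ 2) := by
    have h14 : (0:ℝ) < 1 / 4 - e ^ 2 := by linarith
    have := le_trans (le_max_right 1 ((1 / 4 + log K + 1) / (1 / 4 - e ^ 2))) hTC.le
    calc 1 / 4 + log K + 1 = ((1 / 4 + log K + 1) / (1 / 4 - e ^ 2)) * (1 / 4 - e ^ 2) :=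
          (div_mul_cancel₀ _ (ne_of_gt h14)).symm
    _ ≤ C * (1 / 4 - e ^ 2) := mul_le_mul_of_nonneg_right (by linarith) h14.le
  -- lower bound for `GG C x`
  have hlow : rexp (-C * e ^ 2) ≤ GG C x := by
    have : rexp (-C * e ^ 2) = rexp (-C * (((-round x : ℤ) : ℝ) + x) ^ 2) := by
      congr 1
      rw [he]
      push_cast
      ring
    rw [this]
    exact Summable.le_tsum (summableGG hCpos x) (-round x) (fun b _ => (exp_pos _).le)
  -- upper bound for `GG C (1/2)`
  have hupp : GG C (1 / 2) ≤ rexp (-(C - 1) / 4) * K := by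
    rw [hK]
    unfold GG
    rw [← tsum_mul_left]
    refine Summable.tsum_le_tsum (fun n => ?_) (summableGG hCpos (1/2)) ((summableGG one_pos (1/2)).mul_left _)
    rw [← Real.exp_add, Real.exp_le_exp]
    have hsq : 1 / 4 ≤ ((n:ℝ) + 1 / 2) ^ 2 := by
      rcases le_or_gt 0 (n:ℝ) with h' | h'
      · nlinarith
      · have : (n:ℝ) ≤ -1 := by
          have : (n:ℤ) < 0 := by exact_mod_cast h'
          have : (n:ℤ) ≤ -1 := by omega
          exact_mod_cast this
        nlinarith
    nlinarith [mul_le_mul_of_nonneg_left hsq (by linarith : (0:ℝ) ≤ C - 1)]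
  have heq : GG C x = GG C (1 / 2) := GG_eq_iter hc h k
  have hchain : rexp (-C * e ^ 2) ≤ rexp (-(C - 1) / 4) * K := by
    calc rexp (-C * e ^ 2) ≤ GG C x := hlow
    _ = GG C (1 / 2) := heq
    _ ≤ rexp (-(C - 1) / 4) * K := hupp
  have hlog := Real.log_le_log (exp_pos _) hchain
  rw [Real.log_exp, Real.log_mul (ne_of_gt (exp_pos _)) (ne_of_gt hKpos), Real.log_exp] at hlog
  nlinarith [hCe, hlog]

lemma pi_summable : ∀ (d : ℕ) (F : Fin d → ℤ → ℝ), (∀ i, Summable (F i)) →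
    (∀ i n, 0 ≤ F i n) → Summable (fun m : Fin d → ℤ => ∏ i, F i (m i)) := by
  intro d
  induction d with
  | zero =>
    intro F _ _
    exact .of_finite
  | succ d ih =>
    intro F h hnn
    obtain ⟨G, hGdef⟩ : ∃ G : (Fin d → ℤ) → ℝ, G = fun m => ∏ i, F i.succ (m i) := ⟨_, rfl⟩
    have hG : Summable G := by
      rw [hGdef]; exact ih (fun i => F i.succ) (fun i => h i.succ) (fun i n => hnn i.succ n)
    have hg' : (0 : (Fin d → ℤ) → ℝ) ≤ G := by
      rw [hGdef]; exact fun m => Finset.prod_nonneg fun i _ => hnn i.succ _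
    have hf' : (0 : ℤ → ℝ) ≤ F 0 := fun n => hnn 0 n
    have base : Summable (fun p : ℤ × (Fin d → ℤ) => F 0 p.1 * G p.2) :=
      Summable.mul_of_nonneg (h 0) hG hf' hg'
    have hcomp := ((Fin.consEquiv (fun _ : Fin (d+1) => ℤ)).symm.summable_iff
      (f := fun p : ℤ × (Fin d → ℤ) => F 0 p.1 * G p.2)).2 base
    refine hcomp.congr fun m => ?_
    simp only [Function.comp_apply, Fin.consEquiv_symm_apply, hGdef]
    rw [Fin.prod_univ_succ]
    rfl

lemma pi_tsum : ∀ (d : ℕ) (F : Fin d → ℤ → ℝ), (∀ i, Summable (F i)) →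
    (∀ i n, 0 ≤ F i n) →
    (∑' m : Fin d → ℤ, ∏ i, F i (m i)) = ∏ i, ∑' n : ℤ, F i n := by
  intro d
  induction d with
  | zero =>
    intro F _ _
    simp
  | succ d ih =>
    intro F h hnn
    obtain ⟨G, hGdef⟩ : ∃ G : (Fin d → ℤ) → ℝ, G = fun m => ∏ i, F i.succ (m i) := ⟨_, rfl⟩
    have hG : Summable G := by
      rw [hGdef]; exact pi_summable d (fun i => F i.succ) (fun i => h i.succ)
        (fun i n => hnn i.succ n)
    have hg' : (0 : (Fin d → ℤ) → ℝ) ≤ G := by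
      rw [hGdef]; exact fun m => Finset.prod_nonneg fun i _ => hnn i.succ _
    have hf' : (0 : ℤ → ℝ) ≤ F 0 := fun n => hnn 0 n
    have base : Summable (fun p : ℤ × (Fin d → ℤ) => F 0 p.1 * G p.2) :=
      Summable.mul_of_nonneg (h 0) hG hf' hg'
    have key : (∑' m : Fin (d+1) → ℤ, ∏ i, F i (m i))
        = ∑' p : ℤ × (Fin d → ℤ), F 0 p.1 * G p.2 := by
      rw [← ((Fin.consEquiv (fun _ : Fin (d+1) => ℤ)).tsum_eq (fun m : Fin (d+1) → ℤ => ∏ i, F i (m i)))]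
      refine tsum_congr fun p => ?_
      simp only [Fin.consEquiv_apply, hGdef]
      rw [Fin.prod_univ_succ]
      simp [Fin.cons_zero, Fin.cons_succ]
    rw [key, ← Summable.tsum_mul_tsum (h 0) hG base, Fin.prod_univ_succ]
    congr 1
    rw [hGdef] at *
    exact ih (fun i => F i.succ) (fun i => h i.succ) (fun i n => hnn i.succ n)

lemma theta_factor (d : ℕ) (a : Fin d → ℝ) (ha : ∀ i, 0 < a i) {α : ℝ} (hα : 0 < α)
    (z : Fin d → ℝ) :
    (∑' m : Fin d → ℤ, rexp (-π * α * ∑ i, (a i * (m i : ℝ) + z i) ^ 2)) =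
      ∏ i, GG (π * α * a i ^ 2) (z i / a i) := by
  have hc : ∀ i, (0:ℝ) < π * α * a i ^ 2 := fun i => by
    have := pi_pos; have := ha i; positivity
  have hterm : ∀ m : Fin d → ℤ, rexp (-π * α * ∑ i, (a i * (m i : ℝ) + z i) ^ 2)
      = ∏ i, rexp (-(π * α * a i ^ 2) * (((m i : ℤ) : ℝ) + z i / a i) ^ 2) := by
    intro m
    rw [← Real.exp_sum]
    congr 1
    rw [show -π * α * ∑ i, (a i * (m i : ℝ) + z i) ^ 2
        = ∑ i, (-π * α * (a i * (m i : ℝ) + z i) ^ 2) by rw [← Finset.mul_sum]]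
    refine Finset.sum_congr rfl fun i _ => ?_
    have hai := (ha i).ne'
    field_simp
  rw [tsum_congr hterm, pi_tsum d _ (fun i => summableGG (hc i) _) (fun i n => (exp_pos _).le)]
  rfl

/-- For the orthorhombic lattice `X = ⊕ᵢ ℤ(aᵢeᵢ)`, the center `z* = (a₁/2,…,a_d/2)`
of the primitive cell minimizes `z ↦ θ_{X+z}(α)` for every `α > 0`, with equality
iff `zᵢ − aᵢ/2 ∈ aᵢℤ` for every `i`. -/
theorem theta_orthorhombic_min_at_center (d : ℕ) (hd : 1 ≤ d)
    (a : Fin d → ℝ) (ha : ∀ i, 0 < a i) (α : ℝ) (hα : 0 < α) (z : Fin d → ℝ) :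
    (∑' m : Fin d → ℤ, Real.exp (-π * α * ∑ i, (a i * (m i : ℝ) + a i / 2) ^ 2)) ≤
      (∑' m : Fin d → ℤ, Real.exp (-π * α * ∑ i, (a i * (m i : ℝ) + z i) ^ 2)) ∧
    ((∑' m : Fin d → ℤ, Real.exp (-π * α * ∑ i, (a i * (m i : ℝ) + a i / 2) ^ 2)) =
        (∑' m : Fin d → ℤ, Real.exp (-π * α * ∑ i, (a i * (m i : ℝ) + z i) ^ 2)) ↔
      ∀ i, ∃ n : ℤ, z i - a i / 2 = a i * (n : ℝ)) := by
  have hc : ∀ i, (0:ℝ) < π * α * a i ^ 2 := fun i => by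
    have := pi_pos; have := ha i; positivity
  have hcenter : (∑' m : Fin d → ℤ, rexp (-π * α * ∑ i, (a i * (m i : ℝ) + a i / 2) ^ 2))
      = ∏ i, GG (π * α * a i ^ 2) (1 / 2) := by
    rw [theta_factor d a ha hα (fun i => a i / 2)]
    refine Finset.prod_congr rfl fun i _ => ?_
    rw [show a i / 2 / a i = 1 / 2 by
      rw [div_div, mul_comm, ← div_div, div_self (ha i).ne']]
  have hz : (∑' m : Fin d → ℤ, rexp (-π * α * ∑ i, (a i * (m i : ℝ) + z i) ^ 2))
      = ∏ i, GG (π * α * a i ^ 2) (z i / a i) := theta_factor d a ha hα z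
  have hle : ∀ i ∈ Finset.univ (α := Fin d),
      GG (π * α * a i ^ 2) (1 / 2) ≤ GG (π * α * a i ^ 2) (z i / a i) :=
    fun i _ => GG_min (hc i) _
  have hposf : ∀ i ∈ Finset.univ (α := Fin d), 0 < GG (π * α * a i ^ 2) (1 / 2) :=
    fun i _ => GG_pos (hc i) _
  constructor
  · rw [hcenter, hz]
    exact Finset.prod_le_prod (fun i hi => (hposf i hi).le) hle
  · rw [hcenter, hz]
    constructor
    · intro heq
      by_contra hno
      push_neg at hno
      obtain ⟨i₀, hi₀⟩ := hno
      have hne : GG (π * α * a i₀ ^ 2) (1 / 2) ≠ GG (π * α * a i₀ ^ 2) (z i₀ / a i₀) := by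
        intro hgg
        obtain ⟨n, hn⟩ := GG_eq_imp (hc i₀) hgg.symm
        refine hi₀ n ?_
        have hai := (ha i₀).ne'
        field_simp at hn ⊢
        linarith [hn]
      have hlt : GG (π * α * a i₀ ^ 2) (1 / 2) < GG (π * α * a i₀ ^ 2) (z i₀ / a i₀) :=
        lt_of_le_of_ne (hle i₀ (Finset.mem_univ _)) hne
      have := Finset.prod_lt_prod hposf hle ⟨i₀, Finset.mem_univ _, hlt⟩
      exact absurd heq (ne_of_lt this)
    · intro hall
      refine Finset.prod_congr rfl fun i _ => ?_
      obtain ⟨n, hn⟩ := hall i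
      have hai := (ha i).ne'
      have : z i / a i = 1 / 2 + (n : ℝ) := by
        field_simp at hn ⊢
        linarith [hn]
      rw [this, GG_int_add (c := π * α * a i ^ 2) (1 / 2) n]
end
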